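/- arXiv:0906.0545 — 8 statements merged into one kernel-verified Lean document; each statement's English description precedes it below -/
import Mathlib

section
/- For all positive integers f, q and every natural number k, the identity ∑_{i=0}^{k} i(i−1) · C(f−1+i, f−1) · C(q−1+k−i, q−1) = f(f+1) · C(f+q+k−1, f+q+1) holds, where C(a,b) denotes the binomial coefficient. -/
open Finset

/-- Hockey stick: `∑_{i=0}^{N} C(a+i, i) = C(a+N+1, N)`. -/
lemma koszul_hockey (a : ℕ) : ∀ N, ∑ i ∈ range (N + 1), Nat.choose (a + i) i
    = Nat.choose (a + N + 1) N := by
  intro N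
  induction N with
  | zero => simp
  | succ N ih =>
    rw [Finset.sum_range_succ, ih]
    have : a + (N + 1) + 1 = (a + N + 1) + 1 := by ring
    rw [this, Nat.choose_succ_succ']
    ring_nf

/-- Convolution identity: `∑_{i=0}^{n} C(a+i,i) C(b+n-i, n-i) = C(a+b+n+1, n)`. -/
lemma koszul_conv : ∀ n b a, ∑ i ∈ range (n + 1),
    Nat.choose (a + i) i * Nat.choose (b + (n - i)) (n - i)
    = Nat.choose (a + b + n + 1) n := by
  intro n
  induction n with
  | zero => simp
  | succ n ih =>
    intro b
    induction b with
    | zero =>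
      intro a
      have h : ∀ i ∈ range (n + 2),
          Nat.choose (a + i) i * Nat.choose (0 + (n + 1 - i)) (n + 1 - i)
          = Nat.choose (a + i) i := by
        intro i _
        simp [Nat.choose_self]
      rw [Finset.sum_congr rfl h, koszul_hockey]
      norm_num
    | succ b ihb =>
      intro a
      have key : ∀ i ∈ range (n + 1),
          Nat.choose (a + i) i * Nat.choose (b + 1 + (n + 1 - i)) (n + 1 - i)
          = Nat.choose (a + i) i * Nat.choose (b + 1 + (n - i)) (n - i)
            + Nat.choose (a + i) i * Nat.choose (b + (n + 1 - i)) (n + 1 - i) := by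
        intro i hi
        rw [Finset.mem_range] at hi
        have h1 : n + 1 - i = (n - i) + 1 := by omega
        have h2 : b + 1 + (n + 1 - i) = (b + 1 + (n - i)) + 1 := by omega
        have h3 : b + (n + 1 - i) = b + 1 + (n - i) := by omega
        rw [h2, h3, h1, Nat.choose_succ_succ', Nat.mul_add]
      rw [Finset.sum_range_succ, Finset.sum_congr rfl key, Finset.sum_add_distrib,
        ih (b + 1) a]
      have last : Nat.choose (a + (n + 1)) (n + 1)
            * Nat.choose (b + 1 + (n + 1 - (n + 1))) (n + 1 - (n + 1))
          = Nat.choose (a + (n + 1)) (n + 1) * Nat.choose (b + (n + 1 - (n + 1))) (n + 1 - (n + 1)) := by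
        simp
      rw [last]
      have : ∑ i ∈ range (n + 1),
            Nat.choose (a + i) i * Nat.choose (b + (n + 1 - i)) (n + 1 - i)
          + Nat.choose (a + (n + 1)) (n + 1)
            * Nat.choose (b + (n + 1 - (n + 1))) (n + 1 - (n + 1))
          = Nat.choose (a + b + (n + 1) + 1) (n + 1) := by
        rw [← Finset.sum_range_succ]
        exact ihb a
      rw [Nat.add_assoc, this]
      have h4 : a + (b + 1) + (n + 1) + 1 = (a + b + (n + 1) + 1) + 1 := by ring
      have h5 : a + (b + 1) + n + 1 = a + b + (n + 1) + 1 := by ring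
      rw [h4, h5]
      exact (Nat.choose_succ_succ' (a + b + (n + 1) + 1) n).symm

/-- Termwise absorption: `i(i-1) C(f-1+i, f-1) = f(f+1) C(f-1+i, f+1)` for `f ≥ 1`. -/
lemma koszul_term (f : ℕ) (hf : 0 < f) (i : ℕ) :
    i * (i - 1) * Nat.choose (f - 1 + i) (f - 1)
    = f * (f + 1) * Nat.choose (f - 1 + i) (f + 1) := by
  obtain ⟨g, rfl⟩ : ∃ g, f = g + 1 := ⟨f - 1, by omega⟩
  simp only [Nat.add_sub_cancel]
  have h1 : Nat.choose (g + i) (g + 2) * (g + 2) = Nat.choose (g + i) (g + 1) * (i - 1) := by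
    rw [Nat.choose_succ_right_eq]
    congr 1
    omega
  have h2 : Nat.choose (g + i) (g + 1) * (g + 1) = Nat.choose (g + i) g * i := by
    rw [Nat.choose_succ_right_eq]
    congr 1
    omega
  calc i * (i - 1) * Nat.choose (g + i) g
      = (Nat.choose (g + i) g * i) * (i - 1) := by ring
    _ = (Nat.choose (g + i) (g + 1) * (g + 1)) * (i - 1) := by rw [h2]
    _ = (Nat.choose (g + i) (g + 1) * (i - 1)) * (g + 1) := by ring
    _ = (Nat.choose (g + i) (g + 2) * (g + 2)) * (g + 1) := by rw [h1]
    _ = (g + 1) * (g + 1 + 1) * Nat.choose (g + i) (g + 1 + 1) := by ring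

/-- Absorption identity: for positive integers `f`, `q` and any `k`,
`∑_{i=0}^{k} i(i−1) · C(f−1+i, f−1) · C(q−1+k−i, q−1) = f(f+1) · C(f+q+k−1, f+q+1)`. -/
theorem koszul_absorption_falling_second_moment (f q : ℕ) (hf : 0 < f) (hq : 0 < q) (k : ℕ) :
    ∑ i ∈ Finset.range (k + 1),
        i * (i - 1) * Nat.choose (f - 1 + i) (f - 1) * Nat.choose (q - 1 + k - i) (q - 1)
      = f * (f + 1) * Nat.choose (f + q + k - 1) (f + q + 1) := by
  have step1 : ∀ i ∈ range (k + 1),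
      i * (i - 1) * Nat.choose (f - 1 + i) (f - 1) * Nat.choose (q - 1 + k - i) (q - 1)
      = f * (f + 1) * (Nat.choose (f - 1 + i) (f + 1) * Nat.choose (q - 1 + k - i) (q - 1)) := by
    intro i _
    rw [koszul_term f hf i]
    ring
  rw [Finset.sum_congr rfl step1, ← Finset.mul_sum]
  congr 1
  -- remains: ∑ C(f-1+i, f+1) C(q-1+k-i, q-1) = C(f+q+k-1, f+q+1)
  rcases Nat.lt_or_ge k 2 with hk | hk
  · have hz : ∀ i ∈ range (k + 1), Nat.choose (f - 1 + i) (f + 1)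
        * Nat.choose (q - 1 + k - i) (q - 1) = 0 := by
      intro i hi
      rw [Finset.mem_range] at hi
      have : Nat.choose (f - 1 + i) (f + 1) = 0 := Nat.choose_eq_zero_of_lt (by omega)
      rw [this, Nat.zero_mul]
    rw [Finset.sum_congr rfl hz, Finset.sum_const, smul_zero]
    rw [Nat.choose_eq_zero_of_lt (by omega)]
  · obtain ⟨m, rfl⟩ : ∃ m, k = m + 2 := ⟨k - 2, by omega⟩
    rw [Finset.sum_range_succ', Finset.sum_range_succ']
    have e0 : Nat.choose (f - 1 + 0) (f + 1) = 0 := Nat.choose_eq_zero_of_lt (by omega)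
    have e1 : Nat.choose (f - 1 + 1) (f + 1) = 0 := Nat.choose_eq_zero_of_lt (by omega)
    rw [e0, e1]
    simp only [Nat.zero_mul, Nat.add_zero]
    have key : ∀ j ∈ range (m + 1),
        Nat.choose (f - 1 + (j + 1 + 1)) (f + 1) * Nat.choose (q - 1 + (m + 2) - (j + 1 + 1)) (q - 1)
        = Nat.choose ((f + 1) + j) j * Nat.choose ((q - 1) + (m - j)) (m - j) := by
      intro j hj
      rw [Finset.mem_range] at hj
      have h1 : f - 1 + (j + 1 + 1) = (f + 1) + j := by omega
      have h2 : q - 1 + (m + 2) - (j + 1 + 1) = (q - 1) + (m - j) := by omega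
      rw [h1, h2]
      congr 1
      · exact Nat.choose_symm_of_eq_add (by omega)
      · exact Nat.choose_symm_of_eq_add (by omega)
    rw [Finset.sum_congr rfl key, koszul_conv m (q - 1) (f + 1)]
    have h1 : f + 1 + (q - 1) + m + 1 = f + q + m + 1 := by omega
    have h2 : f + q + (m + 2) - 1 = f + q + m + 1 := by omega
    rw [h1, h2]
    exact Nat.choose_symm_of_eq_add (by omega)
end

section
/- For all positive integers f, q, setting e = f+q, and every natural number k, the identity ∑_{i=0}^{k} i² · C(f−1+i, f−1) · C(q−1+k−i, q−1) = f(f+1) · C(e+k−1, e+1) + f · C(e+k−1, e) holds, where C(a,b) denotes the binomial coefficient. -/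
open Finset

lemma hockey (s : ℕ) : ∀ n, ∑ i ∈ range (n+1), (i+s).choose s = (n+s+1).choose (s+1) := by
  intro n
  induction n with
  | zero => simp
  | succ n ih =>
    rw [Finset.sum_range_succ, ih]
    have e1 : n+1+s = n+s+1 := by omega
    have e2 : n+1+s+1 = (n+s+1)+1 := by omega
    rw [e1, show (n+s+1+1).choose (s+1) = (n+s+1).choose s + (n+s+1).choose (s+1)
      from Nat.choose_succ_succ _ _]
    omega

lemma vander (s : ℕ) : ∀ r n, ∑ i ∈ range (n+1), (i+r).choose r * (n-i+s).choose s
    = (n+r+s+1).choose (r+s+1) := by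
  intro r
  induction r with
  | zero =>
    intro n
    simp only [Nat.add_zero, Nat.choose_zero_right, one_mul]
    have h := Finset.sum_range_reflect (fun i => (i+s).choose s) (n+1)
    simp only [Nat.add_sub_cancel] at h
    rw [h, hockey]
    norm_num
  | succ r ihr =>
    intro n
    induction n with
    | zero => simp
    | succ n ihn =>
      have split : ∑ i ∈ range (n+1+1), (i+(r+1)).choose (r+1) * (n+1-i+s).choose s
          = ∑ i ∈ range (n+1+1), ((i+r).choose r * (n+1-i+s).choose s
              + (i+r).choose (r+1) * (n+1-i+s).choose s) := by
        refine Finset.sum_congr rfl fun i _ => ?_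
        have : i + (r+1) = (i+r)+1 := by omega
        rw [this, Nat.choose_succ_succ, add_mul]
      rw [split, Finset.sum_add_distrib, ihr (n+1)]
      have shift : ∑ i ∈ range (n+1+1), (i+r).choose (r+1) * (n+1-i+s).choose s
          = ∑ i ∈ range (n+1), (i+(r+1)).choose (r+1) * (n-i+s).choose s := by
        rw [Finset.sum_range_succ']
        have h0 : (0+r).choose (r+1) = 0 := by
          apply Nat.choose_eq_zero_of_lt; omega
        rw [h0, zero_mul, add_zero]
        refine Finset.sum_congr rfl fun i hi => ?_
        have hi' : i ≤ n := by simpa [Nat.lt_succ_iff] using hi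
        have e1 : i+1+r = i+(r+1) := by omega
        have e2 : n+1-(i+1) = n-i := by omega
        rw [e1, e2]
      rw [shift, ihn]
      have pascal : (n+(r+1)+s+1+1).choose ((r+1)+s+1)
          = (n+(r+1)+s+1).choose (r+s+1) + (n+(r+1)+s+1).choose ((r+1)+s+1) := by
        have e : (r+1)+s+1 = (r+s+1)+1 := by omega
        rw [e, Nat.choose_succ_succ]
      have e3 : n+1+r+s+1 = n+(r+1)+s+1 := by omega
      have e4 : n+1+(r+1)+s+1 = n+(r+1)+s+1+1 := by omega
      rw [e3, e4, pascal]

lemma Bval (f q : ℕ) (hf : 0 < f) (hq : 0 < q) (k : ℕ) :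
    ∑ i ∈ range (k+1), (f-1+i).choose f * (q-1+k-i).choose (q-1)
      = (f+q+k-1).choose (f+q) := by
  cases k with
  | zero =>
    simp only [zero_add, Finset.sum_range_one]
    have h0 : (f-1+0).choose f = 0 := Nat.choose_eq_zero_of_lt (by omega)
    have h1 : (f+q+0-1).choose (f+q) = 0 := Nat.choose_eq_zero_of_lt (by omega)
    rw [h0, h1]; ring
  | succ m =>
    rw [Finset.sum_range_succ']
    have h0 : (f-1+0).choose f = 0 := Nat.choose_eq_zero_of_lt (by omega)
    rw [h0, zero_mul, add_zero]
    have hshift : ∑ i ∈ range (m+1), (f-1+(i+1)).choose f * (q-1+(m+1)-(i+1)).choose (q-1)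
        = ∑ i ∈ range (m+1), (i+f).choose f * (m-i+(q-1)).choose (q-1) := by
      refine Finset.sum_congr rfl fun i hi => ?_
      have hi' : i ≤ m := by simpa [Nat.lt_succ_iff] using hi
      have e1 : f-1+(i+1) = i+f := by omega
      have e2 : q-1+(m+1)-(i+1) = m-i+(q-1) := by omega
      rw [e1, e2]
    rw [hshift, vander (q-1) f m]
    congr 1 <;> omega

lemma Aval (f q : ℕ) (hf : 0 < f) (hq : 0 < q) (k : ℕ) :
    ∑ i ∈ range (k+1), (f-1+i).choose (f+1) * (q-1+k-i).choose (q-1)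
      = (f+q+k-1).choose (f+q+1) := by
  match k with
  | 0 =>
    simp only [zero_add, Finset.sum_range_one]
    have h0 : (f-1+0).choose (f+1) = 0 := Nat.choose_eq_zero_of_lt (by omega)
    have h1 : (f+q+0-1).choose (f+q+1) = 0 := Nat.choose_eq_zero_of_lt (by omega)
    rw [h0, h1]; ring
  | 1 =>
    rw [Finset.sum_range_succ, Finset.sum_range_one]
    have h0 : (f-1+0).choose (f+1) = 0 := Nat.choose_eq_zero_of_lt (by omega)
    have h1 : (f-1+1).choose (f+1) = 0 := Nat.choose_eq_zero_of_lt (by omega)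
    have h2 : (f+q+1-1).choose (f+q+1) = 0 := Nat.choose_eq_zero_of_lt (by omega)
    rw [h0, h1, h2]; ring
  | (m+2) =>
    rw [Finset.sum_range_succ', Finset.sum_range_succ']
    have h0 : (f-1+0).choose (f+1) = 0 := Nat.choose_eq_zero_of_lt (by omega)
    have h1 : (f-1+(0+1)).choose (f+1) = 0 := Nat.choose_eq_zero_of_lt (by omega)
    rw [h0, h1, zero_mul, zero_mul, add_zero, add_zero]
    have hshift : ∑ i ∈ range (m+1), (f-1+(i+1+1)).choose (f+1) * (q-1+(m+2)-(i+1+1)).choose (q-1)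
        = ∑ i ∈ range (m+1), (i+(f+1)).choose (f+1) * (m-i+(q-1)).choose (q-1) := by
      refine Finset.sum_congr rfl fun i hi => ?_
      have hi' : i ≤ m := by simpa [Nat.lt_succ_iff] using hi
      have e1 : f-1+(i+1+1) = i+(f+1) := by omega
      have e2 : q-1+(m+2)-(i+1+1) = m-i+(q-1) := by omega
      rw [e1, e2]
    rw [hshift, vander (q-1) (f+1) m]
    congr 1 <;> omega

lemma moment (f : ℕ) (hf : 0 < f) (i : ℕ) :
    i ^ 2 * (f-1+i).choose (f-1)
      = f * (f+1) * (f-1+i).choose (f+1) + f * (f-1+i).choose f := by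
  rcases Nat.eq_zero_or_pos i with hi | hi
  · subst hi
    have h1 : (f-1+0).choose (f+1) = 0 := Nat.choose_eq_zero_of_lt (by omega)
    have h2 : (f-1+0).choose f = 0 := Nat.choose_eq_zero_of_lt (by omega)
    rw [h1, h2]; ring
  · set n := f-1+i with hn
    have h1 : n.choose f * f = n.choose (f-1) * i := by
      have h := Nat.choose_succ_right_eq n (f-1)
      have e1 : f-1+1 = f := by omega
      have e2 : n - (f-1) = i := by omega
      rw [e1, e2] at h
      exact h
    have h2 : n.choose (f+1) * (f+1) = n.choose f * (i-1) := by
      have h := Nat.choose_succ_right_eq n f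
      have e2 : n - f = i - 1 := by omega
      rw [e2] at h
      exact h
    have h3 : i * n.choose f = (f+1) * n.choose (f+1) + n.choose f := by
      have : i * n.choose f = (i-1) * n.choose f + n.choose f := by
        have : i = (i-1) + 1 := by omega
        nlinarith [this]
      rw [this, mul_comm (i-1) (n.choose f), ← h2]; ring
    calc i ^ 2 * n.choose (f-1) = i * (n.choose (f-1) * i) := by ring
      _ = i * (n.choose f * f) := by rw [h1]
      _ = f * (i * n.choose f) := by ring
      _ = f * ((f+1) * n.choose (f+1) + n.choose f) := by rw [h3]
      _ = f * (f+1) * n.choose (f+1) + f * n.choose f := by ring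
/-- For positive integers `f`, `q`, with `e = f+q`, and any `k`,
`∑_{i=0}^{k} i² · C(f−1+i, f−1) · C(q−1+k−i, q−1) = f(f+1)·C(e+k−1, e+1) + f·C(e+k−1, e)`. -/
theorem koszul_absorption_second_moment (f q : ℕ) (hf : 0 < f) (hq : 0 < q) (k : ℕ) :
    ∑ i ∈ Finset.range (k + 1),
        i ^ 2 * Nat.choose (f - 1 + i) (f - 1) * Nat.choose (q - 1 + k - i) (q - 1)
      = f * (f + 1) * Nat.choose (f + q + k - 1) (f + q + 1)
        + f * Nat.choose (f + q + k - 1) (f + q) := by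
  have hsplit : ∑ i ∈ Finset.range (k + 1),
        i ^ 2 * Nat.choose (f - 1 + i) (f - 1) * Nat.choose (q - 1 + k - i) (q - 1)
      = ∑ i ∈ Finset.range (k + 1),
        (f * (f + 1) * ((f-1+i).choose (f+1) * (q-1+k-i).choose (q-1))
          + f * ((f-1+i).choose f * (q-1+k-i).choose (q-1))) := by
    refine Finset.sum_congr rfl fun i _ => ?_
    rw [moment f hf i]
    ring
  rw [hsplit, Finset.sum_add_distrib, ← Finset.mul_sum, ← Finset.mul_sum,
    Aval f q hf hq k, Bval f q hf hq k]
end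

section
/- For all positive integers f, q, setting e = f+q, and every natural number k, the identity ∑_{i=0}^{k} i(k−i) · C(f−1+i, f−1) · C(q−1+k−i, q−1) = f·q · C(e+k−1, e+1) holds, where C(a,b) denotes the binomial coefficient. -/
open Finset
lemma koszul_aux_conv (a : ℕ) : ∀ n b : ℕ,
    ∑ j ∈ Finset.range (n + 1), (j + a).choose a * (n - j + b).choose b
      = (n + a + b + 1).choose (a + b + 1) := by
  intro n
  induction n with
  | zero => intro b; simp
  | succ n ih =>
    intro b
    induction b with
    | zero =>
      simpa using Nat.sum_range_add_choose (n + 1) a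
    | succ b ihb =>
      have hsplit : ∀ j ∈ Finset.range (n + 1),
          (j + a).choose a * (n + 1 - j + (b + 1)).choose (b + 1)
            = (j + a).choose a * (n - j + (b + 1)).choose (b + 1)
              + (j + a).choose a * (n + 1 - j + b).choose b := by
        intro j hj
        simp only [Finset.mem_range] at hj
        have h1 : n + 1 - j + (b + 1) = (n - j + (b + 1)) + 1 := by omega
        have h2 : n - j + (b + 1) = n + 1 - j + b := by omega
        rw [h1, Nat.choose_succ_succ', Nat.mul_add, h2]
        exact Nat.add_comm _ _
      rw [Finset.sum_range_succ, Finset.sum_congr rfl hsplit, Finset.sum_add_distrib, ih (b+1)]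
      rw [Finset.sum_range_succ] at ihb
      simp only [Nat.sub_self, Nat.zero_add, Nat.choose_self, Nat.mul_one] at ihb ⊢
      have h4 := Nat.choose_succ_succ (n + a + b + 2) (a + b + 1)
      simp only [Nat.succ_eq_add_one] at h4
      have e1 : n + 1 + a + b + 1 = n + a + b + 2 := by omega
      have e2 : n + 1 + a + (b + 1) + 1 = n + a + b + 2 + 1 := by omega
      have e3 : n + a + (b + 1) + 1 = n + a + b + 2 := by omega
      have e4 : a + (b + 1) + 1 = a + b + 1 + 1 := by omega
      rw [e1] at ihb
      rw [e2, e3, e4] at *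
      omega

/-- Shifted convolution: `∑_{i=0}^n C(i+a, a+1) C(n-i+b, b+1) = C(n+a+b+1, a+b+3)`. -/
lemma koszul_aux_conv' (a b n : ℕ) :
    ∑ i ∈ Finset.range (n + 1), (i + a).choose (a + 1) * (n - i + b).choose (b + 1)
      = (n + a + b + 1).choose (a + b + 3) := by
  match n with
  | 0 =>
    simp [Nat.choose_succ_self, Nat.choose_eq_zero_of_lt (by omega : a + b + 1 < a + b + 3)]
  | 1 =>
    rw [Finset.sum_range_succ, Finset.sum_range_succ, Finset.sum_range_zero]
    simp [Nat.choose_succ_self, Nat.choose_eq_zero_of_lt (by omega : 1 + a + b + 1 < a + b + 3)]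
  | (m + 2) =>
    rw [Finset.sum_range_succ']
    simp only [Nat.zero_add, Nat.choose_succ_self, Nat.zero_mul, Nat.add_zero]
    rw [Finset.sum_range_succ]
    have hlast : m + 2 - (m + 1 + 1) + b = b := by omega
    rw [hlast]
    simp only [Nat.choose_succ_self, Nat.mul_zero, Nat.add_zero]
    have hcongr : ∀ i ∈ Finset.range (m + 1),
        (i + 1 + a).choose (a + 1) * (m + 2 - (i + 1) + b).choose (b + 1)
          = (i + (a + 1)).choose (a + 1) * (m - i + (b + 1)).choose (b + 1) := by
      intro i hi
      simp only [Finset.mem_range] at hi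
      have h1 : i + 1 + a = i + (a + 1) := by omega
      have h2 : m + 2 - (i + 1) + b = m - i + (b + 1) := by omega
      rw [h1, h2]
    rw [Finset.sum_congr rfl hcongr, koszul_aux_conv (a + 1) m (b + 1)]
    congr 1 <;> omega

/-- Moment absorption: `i * C(i+a, a) = (a+1) * C(i+a, a+1)`. -/
lemma koszul_aux_mom (a i : ℕ) :
    i * (i + a).choose a = (a + 1) * (i + a).choose (a + 1) := by
  match i with
  | 0 => simp [Nat.choose_succ_self]
  | (j + 1) =>
    have h := Nat.choose_succ_right_eq (j + 1 + a) a
    have h2 : j + 1 + a - a = j + 1 := by omega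
    rw [h2] at h
    rw [Nat.mul_comm, ← h, Nat.mul_comm]

/-- For positive integers `f`, `q`, with `e = f+q`, and any `k`,
`∑_{i=0}^{k} i(k−i) · C(f−1+i, f−1) · C(q−1+k−i, q−1) = f·q·C(e+k−1, e+1)`. -/
theorem koszul_absorption_mixed_moment (f q : ℕ) (hf : 0 < f) (hq : 0 < q) (k : ℕ) :
    ∑ i ∈ Finset.range (k + 1),
        i * (k - i) * Nat.choose (f - 1 + i) (f - 1) * Nat.choose (q - 1 + k - i) (q - 1)
      = f * q * Nat.choose (f + q + k - 1) (f + q + 1) := by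
  obtain ⟨f', rfl⟩ : ∃ f', f = f' + 1 := ⟨f - 1, by omega⟩
  obtain ⟨q', rfl⟩ : ∃ q', q = q' + 1 := ⟨q - 1, by omega⟩
  simp only [Nat.add_sub_cancel]
  have hterm : ∀ i ∈ Finset.range (k + 1),
      i * (k - i) * (f' + i).choose f' * (q' + k - i).choose q'
        = (f' + 1) * (q' + 1) * ((i + f').choose (f' + 1) * (k - i + q').choose (q' + 1)) := by
    intro i hi
    simp only [Finset.mem_range] at hi
    have h1 : q' + k - i = k - i + q' := by omega
    have h2 : f' + i = i + f' := by omega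
    rw [h1, h2]
    have m1 := koszul_aux_mom f' i
    have m2 := koszul_aux_mom q' (k - i)
    calc i * (k - i) * (i + f').choose f' * (k - i + q').choose q'
        = (i * (i + f').choose f') * ((k - i) * (k - i + q').choose q') := by ring
      _ = ((f' + 1) * (i + f').choose (f' + 1)) * ((q' + 1) * (k - i + q').choose (q' + 1)) := by
          rw [m1, m2]
      _ = (f' + 1) * (q' + 1) * ((i + f').choose (f' + 1) * (k - i + q').choose (q' + 1)) := by
          ring
  rw [Finset.sum_congr rfl hterm, ← Finset.mul_sum, koszul_aux_conv' f' q' k]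
  have h3 : f' + 1 + (q' + 1) + k - 1 = k + f' + q' + 1 := by omega
  have h4 : f' + 1 + (q' + 1) + 1 = f' + q' + 3 := by omega
  rw [h3, h4]
end

section
/- Let f, q be positive integers, e = f+q, and let μ_F, μ_Q, g be rational numbers. For every natural number k, −∑_{i=0}^{k} i · C(f−1+i, f−1) · C(q−1+k−i, q−1) · (−i·μ_F − (k−i)·μ_Q + 1 − g) = (f(f+1)·μ_F + f·q·μ_Q) · C(e+k−1, e+1) + (μ_F − (1−g)) · f · C(e+k−1, e). -/
open Finset

lemma hockey_s4 (a n : ℕ) : ∑ j ∈ range (n+1), Nat.choose (a+j) a = Nat.choose (a+n+1) (a+1) := by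
  induction n with
  | zero => simp
  | succ n ih =>
    rw [Finset.sum_range_succ, ih]
    have h1 : a + (n+1) + 1 = (a + n + 1) + 1 := by omega
    have h2 : a + (n+1) = a + n + 1 := by omega
    rw [h1, h2, Nat.choose_succ_succ (a+n+1) a, Nat.add_comm]

lemma vand (n : ℕ) : ∀ b a : ℕ, ∑ j ∈ range (n+1), Nat.choose (a+j) a * Nat.choose (b+n-j) b
    = Nat.choose (a+b+n+1) (a+b+1) := by
  induction n with
  | zero => intro b a; simp
  | succ n ih =>
    intro b
    induction b with
    | zero =>
      intro a
      simpa using hockey_s4 a (n+1)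
    | succ b ihb =>
      intro a
      have key : ∀ j ∈ range (n+2), Nat.choose (a+j) a * Nat.choose (b+1+(n+1)-j) (b+1)
          = Nat.choose (a+j) a * Nat.choose (b+(n+1)-j) b
            + Nat.choose (a+j) a * Nat.choose (b+1+n-j) (b+1) := by
        intro j hj
        rw [Finset.mem_range] at hj
        have h1 : b+1+(n+1)-j = (b+(n+1)-j) + 1 := by omega
        have h2 : b+1+n-j = b+(n+1)-j ∨ (j = n+1 ∧ b+1+n-j = b ∧ b+(n+1)-j = b) := by omega
        rw [h1, Nat.choose_succ_succ]
        rcases h2 with h2 | ⟨_, h2, h3⟩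
        · rw [h2, Nat.mul_add]
        · rw [h2, h3, Nat.mul_add]
      rw [Finset.sum_congr rfl key, Finset.sum_add_distrib, ihb a, Finset.sum_range_succ]
      have hz : b+1+n-(n+1) = b := by omega
      rw [hz, Nat.choose_succ_self, Nat.mul_zero, Nat.add_zero, ih (b+1) a]
      have e1 : a+(b+1)+(n+1)+1 = (a+b+n+2)+1 := by omega
      have e2 : a+(b+1)+1 = (a+b+1)+1 := by omega
      have e3 : a+b+(n+1)+1 = a+b+n+2 := by omega
      have e4 : a+(b+1)+n+1 = a+b+n+2 := by omega
      rw [e1, e2, e3, e4, Nat.choose_succ_succ (a+b+n+2) (a+b+1)]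
      simp only [Nat.succ_eq_add_one, Nat.add_zero]

-- i * C(f-1+i, f-1) = f * C(f-1+i, f)
lemma stepf (f : ℕ) (hf : 0 < f) (i : ℕ) :
    f * Nat.choose (f-1+i) f = i * Nat.choose (f-1+i) (f-1) := by
  have t := Nat.choose_succ_right_eq (f-1+i) (f-1)
  have h1 : f-1+1 = f := by omega
  have h2 : f-1+i-(f-1) = i := by omega
  rw [h1, h2] at t
  rw [Nat.mul_comm f, Nat.mul_comm i]
  exact t

lemma sumA1 (f q : ℕ) (hf : 0 < f) (hq : 0 < q) (k : ℕ) :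
    ∑ i ∈ range (k+1), i * Nat.choose (f-1+i) (f-1) * Nat.choose (q-1+k-i) (q-1)
      = f * Nat.choose (f+q+k-1) (f+q) := by
  have hc : ∀ i ∈ range (k+1), i * Nat.choose (f-1+i) (f-1) * Nat.choose (q-1+k-i) (q-1)
      = f * Nat.choose (f-1+i) f * Nat.choose (q-1+k-i) (q-1) := by
    intro i _; rw [stepf f hf i]
  rw [Finset.sum_congr rfl hc]
  rcases k with _ | k'
  · have h0 : Nat.choose (f-1) f = 0 := Nat.choose_eq_zero_of_lt (by omega)
    have h1 : Nat.choose (f+q-1) (f+q) = 0 := Nat.choose_eq_zero_of_lt (by omega)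
    simp [h0, h1]
  · rw [Finset.sum_range_succ']
    have h0 : Nat.choose (f-1+0) f = 0 := Nat.choose_eq_zero_of_lt (by omega)
    rw [h0]
    have hc2 : ∀ j ∈ range (k'+1), f * Nat.choose (f-1+(j+1)) f * Nat.choose (q-1+(k'+1)-(j+1)) (q-1)
        = f * (Nat.choose (f+j) f * Nat.choose ((q-1)+k'-j) (q-1)) := by
      intro j hj
      rw [Finset.mem_range] at hj
      have e1 : f-1+(j+1) = f+j := by omega
      have e2 : q-1+(k'+1)-(j+1) = (q-1)+k'-j := by omega
      rw [e1, e2, Nat.mul_assoc]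
    rw [Finset.sum_congr rfl hc2, ← Finset.mul_sum, vand k' (q-1) f]
    have e3 : f+(q-1)+k'+1 = f+q+(k'+1)-1 := by omega
    have e4 : f+(q-1)+1 = f+q := by omega
    rw [e3, e4]
    simp

lemma stepf2 (f : ℕ) (hf : 0 < f) (i : ℕ) :
    f * (f+1) * Nat.choose (f-1+i) (f+1) = i * (i-1) * Nat.choose (f-1+i) (f-1) := by
  have t := Nat.choose_succ_right_eq (f-1+i) f
  have h2 : f-1+i-f = i-1 := by omega
  rw [h2] at t
  calc f * (f+1) * Nat.choose (f-1+i) (f+1)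
      = f * (Nat.choose (f-1+i) (f+1) * (f+1)) := by ring
    _ = f * (Nat.choose (f-1+i) f * (i-1)) := by rw [t]
    _ = (f * Nat.choose (f-1+i) f) * (i-1) := by ring
    _ = (i * Nat.choose (f-1+i) (f-1)) * (i-1) := by rw [stepf f hf i]
    _ = i * (i-1) * Nat.choose (f-1+i) (f-1) := by ring

lemma sumA2 (f q : ℕ) (hf : 0 < f) (hq : 0 < q) (k : ℕ) :
    ∑ i ∈ range (k+1), i * (i-1) * Nat.choose (f-1+i) (f-1) * Nat.choose (q-1+k-i) (q-1)
      = f * (f+1) * Nat.choose (f+q+k-1) (f+q+1) := by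
  have hc : ∀ i ∈ range (k+1), i * (i-1) * Nat.choose (f-1+i) (f-1) * Nat.choose (q-1+k-i) (q-1)
      = f * (f+1) * Nat.choose (f-1+i) (f+1) * Nat.choose (q-1+k-i) (q-1) := by
    intro i _; rw [stepf2 f hf i]
  rw [Finset.sum_congr rfl hc]
  rcases k with _ | _ | k'
  · have h1 : Nat.choose (f+q-1) (f+q+1) = 0 := Nat.choose_eq_zero_of_lt (by omega)
    have h0 : Nat.choose (f-1) (f+1) = 0 := Nat.choose_eq_zero_of_lt (by omega)
    simp [h0, h1]
  · have h1 : Nat.choose (f+q+1-1) (f+q+1) = 0 := Nat.choose_eq_zero_of_lt (by omega)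
    have h0 : Nat.choose (f-1+0) (f+1) = 0 := Nat.choose_eq_zero_of_lt (by omega)
    have h0' : Nat.choose (f-1+1) (f+1) = 0 := Nat.choose_eq_zero_of_lt (by omega)
    rw [Finset.sum_range_succ, Finset.sum_range_one, h0, h0', h1]
    simp
  · rw [Finset.sum_range_succ']
    have h0 : Nat.choose (f-1+0) (f+1) = 0 := Nat.choose_eq_zero_of_lt (by omega)
    rw [h0, Finset.sum_range_succ']
    have h1 : Nat.choose (f-1+(0+1)) (f+1) = 0 := Nat.choose_eq_zero_of_lt (by omega)
    rw [h1]
    have hc2 : ∀ j ∈ range (k'+1),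
        f * (f+1) * Nat.choose (f-1+(j+1+1)) (f+1) * Nat.choose (q-1+(k'+1+1)-(j+1+1)) (q-1)
        = f * (f+1) * (Nat.choose ((f+1)+j) (f+1) * Nat.choose ((q-1)+k'-j) (q-1)) := by
      intro j hj
      rw [Finset.mem_range] at hj
      have e1 : f-1+(j+1+1) = (f+1)+j := by omega
      have e2 : q-1+(k'+1+1)-(j+1+1) = (q-1)+k'-j := by omega
      rw [e1, e2, Nat.mul_assoc]
    rw [Finset.sum_congr rfl hc2, ← Finset.mul_sum, vand k' (q-1) (f+1)]
    have e3 : f+1+(q-1)+k'+1 = f+q+(k'+1+1)-1 := by omega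
    have e4 : f+1+(q-1)+1 = f+q+1 := by omega
    rw [e3, e4]
    simp

lemma stepq (q : ℕ) (hq : 0 < q) (k i : ℕ) (hik : i ≤ k) :
    q * Nat.choose (q-1+k-i) q = (k-i) * Nat.choose (q-1+k-i) (q-1) := by
  have t := Nat.choose_succ_right_eq (q-1+k-i) (q-1)
  have h1 : q-1+1 = q := by omega
  have h2 : q-1+k-i-(q-1) = k-i := by omega
  rw [h1, h2] at t
  rw [Nat.mul_comm q, Nat.mul_comm (k-i)]
  exact t

lemma sumA3 (f q : ℕ) (hf : 0 < f) (hq : 0 < q) (k : ℕ) :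
    ∑ i ∈ range (k+1), i * (k-i) * Nat.choose (f-1+i) (f-1) * Nat.choose (q-1+k-i) (q-1)
      = f * q * Nat.choose (f+q+k-1) (f+q+1) := by
  have hc : ∀ i ∈ range (k+1), i * (k-i) * Nat.choose (f-1+i) (f-1) * Nat.choose (q-1+k-i) (q-1)
      = f * q * (Nat.choose (f-1+i) f * Nat.choose (q-1+k-i) q) := by
    intro i hi
    rw [Finset.mem_range] at hi
    calc i * (k-i) * Nat.choose (f-1+i) (f-1) * Nat.choose (q-1+k-i) (q-1)
        = (i * Nat.choose (f-1+i) (f-1)) * ((k-i) * Nat.choose (q-1+k-i) (q-1)) := by ring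
      _ = (f * Nat.choose (f-1+i) f) * (q * Nat.choose (q-1+k-i) q) := by
          rw [stepf f hf i, stepq q hq k i (by omega)]
      _ = f * q * (Nat.choose (f-1+i) f * Nat.choose (q-1+k-i) q) := by ring
  rw [Finset.sum_congr rfl hc, ← Finset.mul_sum]
  rcases k with _ | _ | k'
  · have h1 : Nat.choose (f+q-1) (f+q+1) = 0 := Nat.choose_eq_zero_of_lt (by omega)
    have h0 : Nat.choose (f-1) f = 0 := Nat.choose_eq_zero_of_lt (by omega)
    simp [h0, h1]
  · have h1 : Nat.choose (f+q+1-1) (f+q+1) = 0 := Nat.choose_eq_zero_of_lt (by omega)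
    have h0 : Nat.choose (f-1+0) f = 0 := Nat.choose_eq_zero_of_lt (by omega)
    have h0' : Nat.choose (q-1+1-1) q = 0 := Nat.choose_eq_zero_of_lt (by omega)
    rw [Finset.sum_range_succ, Finset.sum_range_one, h0, h0', h1]
    simp
  · rw [Finset.sum_range_succ]
    have hlast : Nat.choose (q-1+(k'+1+1)-(k'+1+1)) q = 0 := Nat.choose_eq_zero_of_lt (by omega)
    rw [hlast, Finset.sum_range_succ']
    have h0 : Nat.choose (f-1+0) f = 0 := Nat.choose_eq_zero_of_lt (by omega)
    rw [h0]
    have hc2 : ∀ j ∈ range (k'+1),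
        Nat.choose (f-1+(j+1)) f * Nat.choose (q-1+(k'+1+1)-(j+1)) q
        = Nat.choose (f+j) f * Nat.choose (q+k'-j) q := by
      intro j hj
      rw [Finset.mem_range] at hj
      have e1 : f-1+(j+1) = f+j := by omega
      have e2 : q-1+(k'+1+1)-(j+1) = q+k'-j := by omega
      rw [e1, e2]
    rw [Finset.sum_congr rfl hc2, vand k' q f]
    have e3 : f+q+k'+1 = f+q+(k'+1+1)-1 := by omega
    rw [e3]
    simp

lemma sumA2' (f q : ℕ) (hf : 0 < f) (hq : 0 < q) (k : ℕ) :
    ∑ i ∈ range (k+1), i * i * Nat.choose (f-1+i) (f-1) * Nat.choose (q-1+k-i) (q-1)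
      = f * (f+1) * Nat.choose (f+q+k-1) (f+q+1) + f * Nat.choose (f+q+k-1) (f+q) := by
  have hc : ∀ i ∈ range (k+1), i * i * Nat.choose (f-1+i) (f-1) * Nat.choose (q-1+k-i) (q-1)
      = i * (i-1) * Nat.choose (f-1+i) (f-1) * Nat.choose (q-1+k-i) (q-1)
        + i * Nat.choose (f-1+i) (f-1) * Nat.choose (q-1+k-i) (q-1) := by
    intro i _
    rcases i with _ | n
    · simp
    · have h2 : n+1-1 = n := rfl
      rw [h2]; ring
  rw [Finset.sum_congr rfl hc, Finset.sum_add_distrib, sumA2 f q hf hq k, sumA1 f q hf hq k]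

/-- The total weight of the `ℂ*`-action on `H⁰(O_{ℙ(E)}(k))` for `E = F ⊕ Q`:
`−∑_{i=0}^{k} i·C(f−1+i,f−1)·C(q−1+k−i,q−1)·(−i·μF − (k−i)·μQ + 1 − g)
  = (f(f+1)·μF + f·q·μQ)·C(e+k−1, e+1) + (μF − (1−g))·f·C(e+k−1, e)`, where `e = f+q`. -/
theorem total_weight_closed_form (f q : ℕ) (hf : 0 < f) (hq : 0 < q)
    (μF μQ g : ℚ) (k : ℕ) :
    -(∑ i ∈ Finset.range (k + 1),
        (i : ℚ) * (Nat.choose (f - 1 + i) (f - 1) : ℚ) *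
          (Nat.choose (q - 1 + k - i) (q - 1) : ℚ) *
          (-(i : ℚ) * μF - ((k : ℚ) - (i : ℚ)) * μQ + 1 - g))
      = ((f : ℚ) * ((f : ℚ) + 1) * μF + (f : ℚ) * (q : ℚ) * μQ) *
          (Nat.choose (f + q + k - 1) (f + q + 1) : ℚ)
        + (μF - (1 - g)) * (f : ℚ) * (Nat.choose (f + q + k - 1) (f + q) : ℚ) := by
  have key : ∀ i ∈ Finset.range (k+1),
      -((i : ℚ) * (Nat.choose (f - 1 + i) (f - 1) : ℚ) *
          (Nat.choose (q - 1 + k - i) (q - 1) : ℚ) *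
          (-(i : ℚ) * μF - ((k : ℚ) - (i : ℚ)) * μQ + 1 - g))
      = μF * ((i * i * Nat.choose (f-1+i) (f-1) * Nat.choose (q-1+k-i) (q-1) : ℕ) : ℚ)
        + μQ * ((i * (k-i) * Nat.choose (f-1+i) (f-1) * Nat.choose (q-1+k-i) (q-1) : ℕ) : ℚ)
        - (1-g) * ((i * Nat.choose (f-1+i) (f-1) * Nat.choose (q-1+k-i) (q-1) : ℕ) : ℚ) := by
    intro i hi
    rw [Finset.mem_range] at hi
    have hik : i ≤ k := by omega
    push_cast [Nat.cast_sub hik]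
    ring
  rw [← Finset.sum_neg_distrib, Finset.sum_congr rfl key, Finset.sum_sub_distrib,
    Finset.sum_add_distrib, ← Finset.mul_sum, ← Finset.mul_sum, ← Finset.mul_sum,
    ← Nat.cast_sum, ← Nat.cast_sum, ← Nat.cast_sum,
    sumA1 f q hf hq k, sumA2' f q hf hq k, sumA3 f q hf hq k]
  push_cast
  ring
end

section
/- Let p be a polynomial over ℚ with deg p ≤ n and let α = coeff_n(p) be its coefficient of x^n. Let r ≤ n be a positive integer and m_1, …, m_r positive integers. Then the weighted Koszul alternating sum K'(p) := ∑_{S ⊆ {1,…,r}} (−1)^{|S|} · σ_S · p(x − σ_S), where σ_S = ∑_{i∈S} m_i, is a polynomial of degree ≤ n − r + 1 whose coefficient of x^{n−r+1} equals −(n! · r/(n−r+1)!) · α · ∏_{i=1}^{r} m_i. -/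
open Polynomial
section Helpers
open Finset

-- single difference step
lemma diff_step (d : ℕ) (c : ℚ) (q : Polynomial ℚ) (hq : q.degree ≤ (d + 1 : ℕ)) :
    (q - q.comp (X - C c)).degree ≤ (d : ℕ) ∧
    (q - q.comp (X - C c)).coeff d = (d + 1 : ℚ) * c * q.coeff (d + 1) := by
  have hcomp : q.comp (X - C c) = taylor (-c) q := by
    rw [taylor_apply, map_neg, sub_eq_add_neg]
  have hnd : q.natDegree ≤ d + 1 := natDegree_le_iff_degree_le.2 hq
  have hcoeff : ∀ k, d + 1 < k → q.coeff k = 0 := fun k hk =>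
    coeff_eq_zero_of_degree_lt (lt_of_le_of_lt hq (by exact_mod_cast hk))
  constructor
  · rw [degree_le_iff_coeff_zero]
    intro k hk
    have hk' : d + 1 ≤ k := by exact_mod_cast Nat.lt_iff_add_one_le.mp (by exact_mod_cast hk)
    rw [coeff_sub, hcomp, taylor_coeff]
    rcases eq_or_lt_of_le hk' with h | h
    · -- k = d+1
      have h1 : hasseDeriv k q = C (q.coeff k) := by
        ext i
        rw [hasseDeriv_coeff, coeff_C]
        rcases Nat.eq_zero_or_pos i with hi | hi
        · simp [hi]
        · have h0 : q.coeff (i + k) = 0 := hcoeff _ (by omega)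
          have hi' : i ≠ 0 := by omega
          simp [h0, hi']
      rw [h1, eval_C, sub_self]
    · have h2 : hasseDeriv k q = 0 := by
        ext i
        rw [hasseDeriv_coeff]
        have : q.coeff (i + k) = 0 := hcoeff _ (by omega)
        simp [this]
      rw [h2, eval_zero, hcoeff k h, sub_zero]
  · rw [coeff_sub, hcomp, taylor_coeff]
    have h1 : hasseDeriv d q =
        C (q.coeff d) + C (((d + 1).choose d : ℚ) * q.coeff (d + 1)) * X := by
      ext i
      rw [hasseDeriv_coeff]
      match i with
      | 0 => simp
      | 1 => simp [add_comm 1 d]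
      | (i + 2) =>
        have h0 : q.coeff (i + 2 + d) = 0 := hcoeff _ (by omega)
        simp [h0, coeff_C, coeff_one, coeff_X]
    have hch : (d + 1).choose d = d + 1 := by
      rw [← Nat.choose_symm (Nat.le_succ d)]
      simp
    rw [h1]
    simp [hch]
    ring

lemma koszul_key {ι : Type*} [DecidableEq ι] (s : Finset ι) :
    ∀ (d : ℕ) (q : Polynomial ℚ), q.degree ≤ (d : ℕ) → s.card ≤ d →
    ∀ (m : ι → ℚ),
    (∑ S ∈ s.powerset, (-1 : Polynomial ℚ) ^ S.card *
        q.comp (X - C (∑ i ∈ S, m i))).degree ≤ ((d - s.card : ℕ) : WithBot ℕ) ∧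
    (∑ S ∈ s.powerset, (-1 : Polynomial ℚ) ^ S.card *
        q.comp (X - C (∑ i ∈ S, m i))).coeff (d - s.card)
      = q.coeff d * (d.descFactorial s.card : ℚ) * ∏ i ∈ s, m i := by
  induction s using Finset.induction_on with
  | empty =>
    intro d q hq _ m
    simp only [Finset.powerset_empty, Finset.sum_singleton, Finset.card_empty,
      Finset.sum_empty, Finset.prod_empty, pow_zero, one_mul, map_zero, sub_zero, comp_X,
      Nat.sub_zero, Nat.descFactorial_zero, Nat.cast_one, mul_one]
    exact ⟨hq, trivial⟩
  | @insert a t ha ih =>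
    intro d q hq hcard m
    rw [Finset.card_insert_of_notMem ha] at hcard ⊢
    obtain ⟨e, rfl⟩ : ∃ e, d = e + 1 := ⟨d - 1, by omega⟩
    set q' : Polynomial ℚ := q - q.comp (X - C (m a)) with hq'def
    have hds := diff_step e (m a) q hq
    have hsum : ∑ S ∈ (insert a t).powerset, (-1 : Polynomial ℚ) ^ S.card *
        q.comp (X - C (∑ i ∈ S, m i)) =
        ∑ S ∈ t.powerset, (-1 : Polynomial ℚ) ^ S.card *
        q'.comp (X - C (∑ i ∈ S, m i)) := by
      rw [Finset.sum_powerset_insert ha, ← Finset.sum_add_distrib]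
      refine Finset.sum_congr rfl fun S hS => ?_
      have haS : a ∉ S := fun h => ha (Finset.mem_powerset.1 hS h)
      rw [Finset.card_insert_of_notMem haS, Finset.sum_insert haS]
      have hcc : q.comp (X - C (m a + ∑ i ∈ S, m i)) =
          (q.comp (X - C (m a))).comp (X - C (∑ i ∈ S, m i)) := by
        rw [comp_assoc]
        congr 1
        rw [sub_comp, X_comp, C_comp, sub_sub, ← C_add, add_comm]
      rw [hcc, hq'def, sub_comp, pow_succ]
      ring
    rw [hsum]
    have hkey := ih e q' hds.1 (by omega) m
    have hco : e + 1 - (t.card + 1) = e - t.card := by omega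
    rw [hco]
    refine ⟨hkey.1, ?_⟩
    rw [hkey.2, hds.2, Nat.succ_descFactorial_succ, Finset.prod_insert ha]
    push_cast
    ring

end Helpers


/-- The weighted Koszul alternating sum `K'(p) = ∑_{S ⊆ {1,…,r}} (−1)^{|S|} σ_S · p(x − σ_S)`,
with `σ_S = ∑_{i∈S} m_i`, of a polynomial `p` of degree ≤ `n` has degree ≤ `n − r + 1` and
its coefficient of `x^{n−r+1}` is `−(n!·r/(n−r+1)!) · coeff_n(p) · ∏ m_i`. -/
theorem weighted_koszul_alternating_sum_leading_coeff (n r : ℕ) (hr : 0 < r) (hrn : r ≤ n)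
    (m : Fin r → ℕ) (hm : ∀ i, 0 < m i) (p : Polynomial ℚ) (hp : p.degree ≤ (n : ℕ)) :
    (∑ S : Finset (Fin r), (-1 : Polynomial ℚ) ^ S.card *
        C ((∑ i ∈ S, m i : ℕ) : ℚ) *
        p.comp (X - C ((∑ i ∈ S, m i : ℕ) : ℚ))).degree ≤ ((n - r + 1 : ℕ) : WithBot ℕ) ∧
    (∑ S : Finset (Fin r), (-1 : Polynomial ℚ) ^ S.card *
        C ((∑ i ∈ S, m i : ℕ) : ℚ) *
        p.comp (X - C ((∑ i ∈ S, m i : ℕ) : ℚ))).coeff (n - r + 1)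
      = -((n.factorial : ℚ) * (r : ℚ) / ((n - r + 1).factorial : ℚ)) * p.coeff n *
          ∏ i, (m i : ℚ) := by
  set mq : Fin r → ℚ := fun i => (m i : ℚ) with hmq
  have hcast : ∀ S : Finset (Fin r), ((∑ i ∈ S, m i : ℕ) : ℚ) = ∑ i ∈ S, mq i := by
    intro S; push_cast; rfl
  set A := ∑ S ∈ (Finset.univ : Finset (Fin r)).powerset,
      (-1 : Polynomial ℚ) ^ S.card * p.comp (X - C (∑ i ∈ S, mq i)) with hA
  set B := ∑ S ∈ (Finset.univ : Finset (Fin r)).powerset,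
      (-1 : Polynomial ℚ) ^ S.card * (X * p).comp (X - C (∑ i ∈ S, mq i)) with hB
  have hT : (∑ S : Finset (Fin r), (-1 : Polynomial ℚ) ^ S.card *
        C ((∑ i ∈ S, m i : ℕ) : ℚ) *
        p.comp (X - C ((∑ i ∈ S, m i : ℕ) : ℚ))) = X * A - B := by
    rw [hA, hB, Finset.mul_sum, ← Finset.sum_sub_distrib, Finset.powerset_univ]
    refine Finset.sum_congr rfl fun S _ => ?_
    rw [hcast, mul_comp, X_comp]
    ring
  have hcardu : (Finset.univ : Finset (Fin r)).card = r := by simp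
  have hAk := koszul_key (Finset.univ : Finset (Fin r)) n p hp (by rw [hcardu]; exact hrn) mq
  have hBk := koszul_key (Finset.univ : Finset (Fin r)) (n + 1) (X * p)
      (by calc (X * p).degree ≤ X.degree + p.degree := degree_mul_le _ _
            _ ≤ 1 + (n : ℕ) := add_le_add degree_X_le hp
            _ = ((n + 1 : ℕ) : WithBot ℕ) := by push_cast; rw [add_comm]) 
      (by rw [hcardu]; omega) mq
  rw [hcardu] at hAk hBk
  have hnr1 : n + 1 - r = n - r + 1 := by omega
  rw [hnr1] at hBk
  have hXp : (X * p).coeff (n + 1) = p.coeff n := coeff_X_mul p n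
  rw [hT]
  constructor
  · refine le_trans (degree_sub_le _ _) (max_le ?_ ?_)
    · refine le_trans (degree_mul_le _ _) ?_
      calc X.degree + A.degree ≤ 1 + ((n - r : ℕ) : WithBot ℕ) := add_le_add degree_X_le hAk.1
        _ = ((n - r + 1 : ℕ) : WithBot ℕ) := by push_cast; rw [add_comm]
    · exact hBk.1
  · rw [coeff_sub, coeff_X_mul, hAk.2, hBk.2, hXp]
    -- numeric identity
    have h1 : ((n - r).factorial : ℚ) * (n.descFactorial r : ℚ) = (n.factorial : ℚ) := by
      exact_mod_cast congrArg (Nat.cast : ℕ → ℚ) (Nat.factorial_mul_descFactorial hrn)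
    have h2 : ((n - r + 1).factorial : ℚ) * ((n + 1).descFactorial r : ℚ)
        = ((n + 1).factorial : ℚ) := by
      have := Nat.factorial_mul_descFactorial (show r ≤ n + 1 by omega)
      rw [hnr1] at this
      exact_mod_cast congrArg (Nat.cast : ℕ → ℚ) this
    have h3 : ((n - r + 1).factorial : ℚ) = ((n - r).factorial : ℚ) * (n - r + 1 : ℕ) := by
      rw [← Nat.cast_mul, mul_comm]
      exact_mod_cast congrArg (Nat.cast : ℕ → ℚ) (Nat.factorial_succ (n - r))
    have h4 : ((n + 1).factorial : ℚ) = (n + 1 : ℕ) * (n.factorial : ℚ) := by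
      exact_mod_cast congrArg (Nat.cast : ℕ → ℚ) (Nat.factorial_succ n)
    have hf1 : ((n - r).factorial : ℚ) ≠ 0 := by exact_mod_cast Nat.factorial_ne_zero _
    have hf2 : ((n - r + 1).factorial : ℚ) ≠ 0 := by exact_mod_cast Nat.factorial_ne_zero _
    have key : (n.descFactorial r : ℚ) - ((n + 1).descFactorial r : ℚ)
        = -((n.factorial : ℚ) * (r : ℚ) / ((n - r + 1).factorial : ℚ)) := by
      rw [← neg_div, eq_div_iff hf2]
      push_cast [Nat.cast_sub hrn] at h3 h4 ⊢
      linear_combination ((n.descFactorial r : ℚ)) * h3 + ((n : ℚ) - r + 1) * h1 - h2 - h4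
    rw [← key]
    ring
end

section
/- Let f, q, r be positive integers with r ≤ f + q − 1, set e = f + q, let d_F, d_Q be integers and g a rational number, and set μ_F = d_F/f, μ_Q = d_Q/q, μ_E = (d_F + d_Q)/e. Let m_1, …, m_r be positive integers, H(x) := (1/(e−1)!)·∏_{j=1}^{e−1}(x+j)·(−μ_E·x + 1 − g), B_m(x) := (1/m!)·∏_{j=0}^{m−1}(x+e−1−j), and T(x) := (f(f+1)μ_F + f·q·μ_Q)·B_{e+1}(x) + (μ_F − (1−g))·f·B_e(x). Then the polynomial Tr_X := ∑_{S ⊆ {1,…,r}} (−1)^{|S|} ( T(x − σ_S) − σ_S · H(x − σ_S) ), where σ_S = ∑_{i∈S} m_i, has degree ≤ e − r + 1 and its coefficient of x^{e−r+1} equals (∏_{i=1}^{r} m_i) · (d_F + (f−r)(d_F + d_Q))/(e+1−r)!. -/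
open Polynomial

private lemma diff_step_s10 (F : ℚ[X]) (c : ℚ) (n : ℕ) (hn : 1 ≤ n) (hF : F.natDegree ≤ n) :
    (F - F.comp (X - C c)).natDegree ≤ n - 1 ∧
    (F - F.comp (X - C c)).coeff (n - 1) = (n : ℚ) * c * F.coeff n := by
  obtain ⟨k, rfl⟩ : ∃ k, n = k + 1 := ⟨n - 1, by omega⟩
  have hct : F.comp (X - C c) = Polynomial.taylor (-c) F := by
    rw [Polynomial.taylor_apply, map_neg, sub_eq_add_neg]
  have hcn : (F.comp (X - C c)).coeff (k + 1) = F.coeff (k + 1) := by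
    rw [hct, Polynomial.taylor_coeff]
    have h0 : (Polynomial.hasseDeriv (k + 1) F).natDegree ≤ 0 := by
      have := Polynomial.natDegree_hasseDeriv_le F (k + 1)
      omega
    rw [Polynomial.eq_C_of_natDegree_le_zero h0, eval_C, Polynomial.hasseDeriv_coeff]
    simp
  have hck : (F.comp (X - C c)).coeff k
      = F.coeff k + ((k : ℚ) + 1) * F.coeff (k + 1) * (-c) := by
    rw [hct, Polynomial.taylor_coeff]
    have h1 : (Polynomial.hasseDeriv k F).natDegree < 2 := by
      have := Polynomial.natDegree_hasseDeriv_le F k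
      omega
    rw [Polynomial.eval_eq_sum_range' h1, Finset.sum_range_succ, Finset.sum_range_one]
    simp only [Polynomial.hasseDeriv_coeff, Nat.zero_add, Nat.choose_self, Nat.cast_one,
      one_mul, pow_zero, mul_one, pow_one]
    have h2 : (1 + k).choose k = k + 1 := by
      rw [Nat.add_comm, Nat.choose_succ_self_right]
    rw [h2]
    have h3 : 1 + k = k + 1 := by omega
    rw [h3]
    push_cast
    ring
  constructor
  · rw [Polynomial.natDegree_le_iff_coeff_eq_zero]
    intro N hN
    rw [coeff_sub]
    rcases eq_or_lt_of_le (show k + 1 ≤ N by omega) with rfl | h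
    · rw [hcn, sub_self]
    · rw [coeff_eq_zero_of_natDegree_lt (lt_of_le_of_lt hF h),
        coeff_eq_zero_of_natDegree_lt, sub_zero]
      rw [hct, Polynomial.natDegree_taylor]
      exact lt_of_le_of_lt hF h
  · rw [coeff_sub, Nat.add_sub_cancel, hck]
    push_cast
    ring

private lemma D_key {ι : Type*} [DecidableEq ι] (c : ι → ℚ) (s : Finset ι) :
    ∀ (n : ℕ) (F : ℚ[X]), s.card ≤ n → F.natDegree ≤ n →
    (∑ S ∈ s.powerset, (-1 : ℚ[X]) ^ S.card *
        F.comp (X - C (∑ i ∈ S, c i))).natDegree ≤ n - s.card ∧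
    (∑ S ∈ s.powerset, (-1 : ℚ[X]) ^ S.card *
        F.comp (X - C (∑ i ∈ S, c i))).coeff (n - s.card)
      = F.coeff n * (∏ i ∈ s, c i) * (n.descFactorial s.card : ℚ) := by
  induction s using Finset.induction_on with
  | empty =>
    intro n F _ hF
    simp only [Finset.powerset_empty, Finset.sum_singleton, Finset.card_empty, pow_zero,
      Finset.sum_empty, C_0, sub_zero, one_mul, comp_X, Finset.prod_empty,
      Nat.descFactorial_zero, Nat.cast_one, mul_one, Nat.sub_zero]
    exact ⟨hF, trivial⟩
  | @insert a s ha ih =>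
    intro n F hcard hF
    rw [Finset.card_insert_of_notMem ha] at hcard ⊢
    have hn : 1 ≤ n := by omega
    obtain ⟨hGdeg, hGcoeff⟩ := diff_step_s10 F (c a) n hn hF
    set G := F - F.comp (X - C (c a)) with hGdef
    have hsum : ∑ S ∈ (insert a s).powerset, (-1 : ℚ[X]) ^ S.card *
          F.comp (X - C (∑ i ∈ S, c i))
        = ∑ S ∈ s.powerset, (-1 : ℚ[X]) ^ S.card * G.comp (X - C (∑ i ∈ S, c i)) := by
      rw [Finset.sum_powerset_insert ha, ← Finset.sum_add_distrib]
      refine Finset.sum_congr rfl fun S hS => ?_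
      have haS : a ∉ S := fun h => ha (Finset.mem_powerset.mp hS h)
      have hcompa : X - C (∑ i ∈ insert a S, c i)
          = (X - C (c a)).comp (X - C (∑ i ∈ S, c i)) := by
        rw [Finset.sum_insert haS]
        simp only [sub_comp, X_comp, C_comp, C_add]
        ring
      rw [Finset.card_insert_of_notMem haS, hcompa, ← comp_assoc, hGdef, sub_comp, pow_succ]
      ring
    rw [hsum]
    have hkey := ih (n - 1) G (by omega) hGdeg
    constructor
    · exact hkey.1.trans_eq (by omega)
    · have hidx : n - (s.card + 1) = n - 1 - s.card := by omega
      rw [hidx, hkey.2, hGcoeff, Finset.prod_insert ha]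
      obtain ⟨k, rfl⟩ : ∃ k, n = k + 1 := ⟨n - 1, by omega⟩
      simp only [Nat.add_sub_cancel, Nat.succ_descFactorial_succ]
      push_cast
      ring

private lemma prod_linear_monic (n : ℕ) (a : ℕ → ℚ) :
    (∏ j ∈ Finset.range n, (X + C (a j))).Monic ∧
    (∏ j ∈ Finset.range n, (X + C (a j))).natDegree = n := by
  have hm : (∏ j ∈ Finset.range n, (X + C (a j))).Monic :=
    monic_prod_of_monic _ _ fun j _ => monic_X_add_C (a j)
  refine ⟨hm, ?_⟩
  rw [Polynomial.natDegree_prod _ _ fun j _ => (monic_X_add_C (a j)).ne_zero]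
  simp [natDegree_X_add_C]

private lemma scalar_id (f q r e : ℕ) (dF dQ : ℤ) (hf : 0 < f) (hq : 0 < q)
    (hre : r + 1 ≤ e) :
    ((f : ℚ) * ((f : ℚ) + 1) * ((dF : ℚ) / (f : ℚ)) + (f : ℚ) * (q : ℚ) * ((dQ : ℚ) / (q : ℚ)))
        * (1 / ((e + 1).factorial : ℚ)) * ((e + 1).descFactorial r : ℚ)
      + (1 / ((e - 1).factorial : ℚ) * (-(((dF : ℚ) + (dQ : ℚ)) / (e : ℚ))))
          * ((e + 1).descFactorial r : ℚ)
      - (1 / ((e - 1).factorial : ℚ) * (-(((dF : ℚ) + (dQ : ℚ)) / (e : ℚ))))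
          * (e.descFactorial r : ℚ)
      = ((dF : ℚ) + ((f : ℚ) - (r : ℚ)) * ((dF : ℚ) + (dQ : ℚ))) / ((e + 1 - r).factorial : ℚ) := by
  have hf' : (f : ℚ) ≠ 0 := Nat.cast_ne_zero.mpr hf.ne'
  have hq' : (q : ℚ) ≠ 0 := Nat.cast_ne_zero.mpr hq.ne'
  have he' : (e : ℚ) ≠ 0 := Nat.cast_ne_zero.mpr (by omega)
  have hfac1 : ((e - 1).factorial : ℚ) ≠ 0 := Nat.cast_ne_zero.mpr (Nat.factorial_ne_zero _)
  have hfac2 : ((e - r).factorial : ℚ) ≠ 0 := Nat.cast_ne_zero.mpr (Nat.factorial_ne_zero _)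
  have her : ((e : ℚ) + 1 - (r : ℚ)) ≠ 0 := by
    have : ((e + 1 - r : ℕ) : ℚ) = (e : ℚ) + 1 - (r : ℚ) := by
      push_cast [Nat.cast_sub (by omega : r ≤ e + 1)]; ring
    rw [← this]
    exact Nat.cast_ne_zero.mpr (by omega)
  have hD1 : ((e + 1).descFactorial r : ℚ)
      = ((e + 1).factorial : ℚ) / ((e + 1 - r).factorial : ℚ) := by
    rw [eq_div_iff (Nat.cast_ne_zero.mpr (Nat.factorial_ne_zero _))]
    rw [mul_comm]
    exact_mod_cast congrArg (Nat.cast (R := ℚ))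
      (Nat.factorial_mul_descFactorial (by omega : r ≤ e + 1))
  have hD2 : (e.descFactorial r : ℚ) = (e.factorial : ℚ) / ((e - r).factorial : ℚ) := by
    rw [eq_div_iff hfac2, mul_comm]
    exact_mod_cast congrArg (Nat.cast (R := ℚ))
      (Nat.factorial_mul_descFactorial (by omega : r ≤ e))
  have hf2 : (e.factorial : ℚ) = (e : ℚ) * ((e - 1).factorial : ℚ) := by
    exact_mod_cast (congrArg (Nat.cast (R := ℚ)) (Nat.mul_factorial_pred (by omega : e ≠ 0))).symm
  have hf1 : ((e + 1).factorial : ℚ) = ((e : ℚ) + 1) * (e : ℚ) * ((e - 1).factorial : ℚ) := by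
    rw [Nat.factorial_succ]
    push_cast
    rw [hf2]
    ring
  have hf3 : ((e + 1 - r).factorial : ℚ)
      = ((e : ℚ) + 1 - (r : ℚ)) * ((e - r).factorial : ℚ) := by
    have h4 : e + 1 - r = (e - r) + 1 := by omega
    rw [h4, Nat.factorial_succ]
    push_cast [Nat.cast_sub (by omega : r ≤ e)]
    ring
  rw [hD1, hD2, hf1, hf2, hf3]
  field_simp
  ring

/-- The total-weight polynomial of the complete intersection,
`Tr_X = ∑_{S⊆{1,…,r}} (−1)^{|S|}(T(x−σ_S) − σ_S·H(x−σ_S))`, has degree ≤ `e−r+1` with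
coefficient of `x^{e−r+1}` equal to `(∏ m_i)·(d_F + (f−r)(d_F+d_Q))/(e+1−r)!`
(the coefficient `a₀` of the paper); here `e = f+q`, `μ_F = d_F/f`, `μ_Q = d_Q/q`,
`μ_E = (d_F+d_Q)/e`. -/
theorem complete_intersection_weight_leading_coeff (f q r : ℕ) (hf : 0 < f) (hq : 0 < q)
    (hr : 0 < r) (hre : r ≤ f + q - 1) (e : ℕ) (he : e = f + q)
    (dF dQ : ℤ) (g : ℚ) (m : Fin r → ℕ) (hm : ∀ i, 0 < m i) :
    let μF : ℚ := (dF : ℚ) / (f : ℚ)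
    let μQ : ℚ := (dQ : ℚ) / (q : ℚ)
    let μE : ℚ := ((dF : ℚ) + (dQ : ℚ)) / (e : ℚ)
    let H : Polynomial ℚ :=
      C (1 / ((e - 1).factorial : ℚ)) *
        (∏ j ∈ Finset.range (e - 1), (X + C ((j : ℚ) + 1))) *
        (-(C μE) * X + C (1 - g))
    let B : ℕ → Polynomial ℚ := fun n =>
      C (1 / (n.factorial : ℚ)) * ∏ j ∈ Finset.range n, (X + C ((e : ℚ) - 1 - (j : ℚ)))
    let T : Polynomial ℚ :=
      C ((f : ℚ) * ((f : ℚ) + 1) * μF + (f : ℚ) * (q : ℚ) * μQ) * B (e + 1)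
        + C ((μF - (1 - g)) * (f : ℚ)) * B e
    let TrX : Polynomial ℚ :=
      ∑ S : Finset (Fin r), (-1 : Polynomial ℚ) ^ S.card *
        (T.comp (X - C ((∑ i ∈ S, m i : ℕ) : ℚ))
          - C ((∑ i ∈ S, m i : ℕ) : ℚ) * H.comp (X - C ((∑ i ∈ S, m i : ℕ) : ℚ)))
    TrX.degree ≤ ((e - r + 1 : ℕ) : WithBot ℕ) ∧
    TrX.coeff (e - r + 1)
      = (∏ i, (m i : ℚ)) * ((dF : ℚ) + ((f : ℚ) - (r : ℚ)) * ((dF : ℚ) + (dQ : ℚ)))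
          / ((e + 1 - r).factorial : ℚ) := by
  intro μF μQ μE H B T TrX
  have he2 : 2 ≤ e := by omega
  have hre' : r + 1 ≤ e := by omega
  -- B facts
  have hB : ∀ n : ℕ, (B n).natDegree ≤ n ∧ (B n).coeff n = 1 / (n.factorial : ℚ) := by
    intro n
    obtain ⟨hm', hd⟩ := prod_linear_monic n fun j => (e : ℚ) - 1 - (j : ℚ)
    have hBn : B n = C (1 / (n.factorial : ℚ)) *
        ∏ j ∈ Finset.range n, (X + C ((e : ℚ) - 1 - (j : ℚ))) := rfl
    refine ⟨hBn ▸ (natDegree_C_mul_le _ _).trans_eq hd, ?_⟩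
    have h1 := hm'.coeff_natDegree
    rw [hd] at h1
    rw [hBn, coeff_C_mul, h1, mul_one]
  -- H facts
  have hHd : H = C (1 / ((e - 1).factorial : ℚ)) *
      (∏ j ∈ Finset.range (e - 1), (X + C ((j : ℚ) + 1))) * (-(C μE) * X + C (1 - g)) := rfl
  obtain ⟨hPm, hPd⟩ := prod_linear_monic (e - 1) fun j => (j : ℚ) + 1
  have hL1 : (-(C μE) * X + C (1 - g)).natDegree ≤ 1 := by
    refine (natDegree_add_le _ _).trans (max_le ?_ ?_)
    · rw [neg_mul]
      rw [natDegree_neg]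
      exact (natDegree_C_mul_le _ _).trans_eq natDegree_X
    · simp [natDegree_C]
  have hL2 : (-(C μE) * X + C (1 - g)).coeff 1 = -μE := by
    rw [coeff_add, neg_mul, coeff_neg, coeff_C_mul, coeff_X_one, coeff_C]
    simp
  have hCP : (C (1 / ((e - 1).factorial : ℚ)) *
      ∏ j ∈ Finset.range (e - 1), (X + C ((j : ℚ) + 1))).natDegree ≤ e - 1 :=
    (natDegree_C_mul_le _ _).trans_eq hPd
  have hHdeg : H.natDegree ≤ e := by
    rw [hHd]
    refine natDegree_mul_le.trans ?_
    have := add_le_add hCP hL1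
    omega
  have hHco : H.coeff e = 1 / ((e - 1).factorial : ℚ) * (-μE) := by
    have h5 := coeff_mul_add_eq_of_natDegree_le hCP hL1
    rw [show e - 1 + 1 = e by omega] at h5
    have h6 := hPm.coeff_natDegree
    rw [hPd] at h6
    rw [hHd, h5, coeff_C_mul, h6, mul_one, hL2]
  -- T facts
  have hTd : T = C ((f : ℚ) * ((f : ℚ) + 1) * μF + (f : ℚ) * (q : ℚ) * μQ) * B (e + 1)
      + C ((μF - (1 - g)) * (f : ℚ)) * B e := rfl
  have hTdeg : T.natDegree ≤ e + 1 := by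
    rw [hTd]
    refine (natDegree_add_le _ _).trans (max_le ?_ ?_)
    · exact (natDegree_C_mul_le _ _).trans (hB (e + 1)).1
    · exact (natDegree_C_mul_le _ _).trans ((hB e).1.trans (by omega))
  have hTco : T.coeff (e + 1)
      = ((f : ℚ) * ((f : ℚ) + 1) * μF + (f : ℚ) * (q : ℚ) * μQ)
          * (1 / ((e + 1).factorial : ℚ)) := by
    have h1 : (C ((f : ℚ) * ((f : ℚ) + 1) * μF + (f : ℚ) * (q : ℚ) * μQ) * B (e + 1)).coeff (e + 1)
        = ((f : ℚ) * ((f : ℚ) + 1) * μF + (f : ℚ) * (q : ℚ) * μQ)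
            * (1 / ((e + 1).factorial : ℚ)) := by
      rw [coeff_C_mul, (hB (e + 1)).2]
    have h2 : (C ((μF - (1 - g)) * (f : ℚ)) * B e).coeff (e + 1) = 0 :=
      coeff_eq_zero_of_natDegree_lt
        (lt_of_le_of_lt (natDegree_C_mul_le _ _) ((hB e).1.trans_lt (by omega)))
    rw [hTd, coeff_add, h1, h2, add_zero]
  -- FF
  set FF : ℚ[X] := T + X * H with hFF
  have hFFdeg : FF.natDegree ≤ e + 1 := by
    refine (natDegree_add_le _ _).trans (max_le hTdeg ?_)
    refine natDegree_mul_le.trans ?_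
    rw [natDegree_X]
    omega
  have hFFco : FF.coeff (e + 1) = T.coeff (e + 1) + H.coeff e := by
    rw [hFF, coeff_add, coeff_X_mul]
  -- apply D_key
  have hcard : (Finset.univ : Finset (Fin r)).card = r := by simp
  have hDF := D_key (fun i => (m i : ℚ)) Finset.univ (e + 1) FF (by rw [hcard]; omega) hFFdeg
  have hDH := D_key (fun i => (m i : ℚ)) Finset.univ e H (by rw [hcard]; omega) hHdeg
  rw [hcard] at hDF hDH
  set DF : ℚ[X] := ∑ S ∈ (Finset.univ : Finset (Fin r)).powerset,
      (-1 : ℚ[X]) ^ S.card * FF.comp (X - C (∑ i ∈ S, (m i : ℚ))) with hDFdef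
  set DH : ℚ[X] := ∑ S ∈ (Finset.univ : Finset (Fin r)).powerset,
      (-1 : ℚ[X]) ^ S.card * H.comp (X - C (∑ i ∈ S, (m i : ℚ))) with hDHdef
  -- decompose TrX
  have hT0 : TrX = ∑ S : Finset (Fin r), (-1 : Polynomial ℚ) ^ S.card *
      (T.comp (X - C ((∑ i ∈ S, m i : ℕ) : ℚ))
        - C ((∑ i ∈ S, m i : ℕ) : ℚ) * H.comp (X - C ((∑ i ∈ S, m i : ℕ) : ℚ))) := rfl
  have hTrX : TrX = DF - X * DH := by
    rw [hT0, hDFdef, hDHdef, Finset.powerset_univ, Finset.mul_sum, ← Finset.sum_sub_distrib]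
    refine Finset.sum_congr rfl fun S _ => ?_
    have hc : ((∑ i ∈ S, m i : ℕ) : ℚ) = ∑ i ∈ S, (m i : ℚ) := by push_cast; rfl
    rw [← hc]
    have hXH : FF.comp (X - C ((∑ i ∈ S, m i : ℕ) : ℚ))
        = T.comp (X - C ((∑ i ∈ S, m i : ℕ) : ℚ))
          + (X - C ((∑ i ∈ S, m i : ℕ) : ℚ))
            * H.comp (X - C ((∑ i ∈ S, m i : ℕ) : ℚ)) := by
      rw [hFF, add_comp, mul_comp, X_comp]
    rw [hXH]
    ring
  have hk : e + 1 - r = e - r + 1 := by omega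
  rw [hk] at hDF
  constructor
  · rw [hTrX]
    have h1 : (DF - X * DH).natDegree ≤ e - r + 1 := by
      refine (natDegree_sub_le _ _).trans (max_le hDF.1 ?_)
      refine natDegree_mul_le.trans ?_
      rw [natDegree_X]
      have := hDH.1
      omega
    exact natDegree_le_iff_degree_le.mp h1
  · have hμF : μF = (dF : ℚ) / (f : ℚ) := rfl
    have hμQ : μQ = (dQ : ℚ) / (q : ℚ) := rfl
    have hμE : μE = ((dF : ℚ) + (dQ : ℚ)) / (e : ℚ) := rfl
    rw [hTrX, coeff_sub, show e - r + 1 = (e - r) + 1 from rfl, coeff_X_mul,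
      hDF.2, hDH.2, hFFco, hTco, hHco, hμF, hμQ, hμE]
    have hs := scalar_id f q r e dF dQ hf hq hre'
    linear_combination (∏ i, (m i : ℚ)) * hs
end

section
/- Let e ≥ 2 be an integer, μ a rational number, r a positive integer with r ≤ e−1, and m_1, …, m_r positive integers. For a rational number g let H_g(x) := (1/(e−1)!) · ∏_{j=1}^{e−1} (x + j) · (−μ·x + 1 − g) and let K(H_g) := ∑_{S ⊆ {1,…,r}} (−1)^{|S|} H_g(x − σ_S), σ_S = ∑_{i∈S} m_i. Then for all rational g_1, g_2, the coefficient of x^{e−r} of K(H_{g_1}) equals that of K(H_{g_2}), and the difference of the coefficients of x^{e−r−1} satisfies coeff_{e−r−1}(K(H_{g_1})) − coeff_{e−r−1}(K(H_{g_2})) = −(∏_{i=1}^{r} m_i) · (g_1 − g_2)/(e−1−r)!. -/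
open Polynomial

noncomputable def Kz {ι : Type*} [DecidableEq ι] (m : ι → ℚ) (s : Finset ι) (Q : ℚ[X]) : ℚ[X] :=
  ∑ S ∈ s.powerset, (-1 : ℚ[X]) ^ S.card * Q.comp (X - C (∑ i ∈ S, m i))

lemma comp_X_sub_C_eq_taylor (Q : ℚ[X]) (c : ℚ) : Q.comp (X - C c) = taylor (-c) Q := by
  rw [taylor_apply, map_neg, ← sub_eq_add_neg]

lemma comp_coeff_top (Q : ℚ[X]) (c : ℚ) (d : ℕ) (hd : Q.natDegree ≤ d) :
    (Q.comp (X - C c)).coeff d = Q.coeff d := by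
  rw [comp_X_sub_C_eq_taylor, taylor_coeff]
  have h1 : (hasseDeriv d Q).natDegree < 1 := by
    have := natDegree_hasseDeriv_le Q d
    omega
  rw [eval_eq_sum_range' h1]
  simp [hasseDeriv_coeff]

lemma comp_coeff_sub_one (Q : ℚ[X]) (c : ℚ) (d : ℕ) (hd1 : 1 ≤ d) (hd : Q.natDegree ≤ d) :
    (Q.comp (X - C c)).coeff (d - 1) = Q.coeff (d - 1) - d * c * Q.coeff d := by
  rw [comp_X_sub_C_eq_taylor, taylor_coeff]
  have h1 : (hasseDeriv (d - 1) Q).natDegree < 2 := by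
    have := natDegree_hasseDeriv_le Q (d - 1)
    omega
  rw [eval_eq_sum_range' h1]
  rw [Finset.sum_range_succ, Finset.sum_range_one]
  rw [hasseDeriv_coeff, hasseDeriv_coeff]
  have h2 : 1 + (d - 1) = d := by omega
  have h3 : d.choose (d - 1) = d := by
    have := Nat.choose_symm hd1 (n := d)
    simp at this
    omega
  rw [h2, Nat.zero_add, Nat.choose_self, h3]
  push_cast
  ring

lemma Kz_insert {ι : Type*} [DecidableEq ι] (m : ι → ℚ) {s : Finset ι} {a : ι} (ha : a ∉ s)
    (Q : ℚ[X]) :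
    Kz m (insert a s) Q = Kz m s Q - Kz m s (Q.comp (X - C (m a))) := by
  unfold Kz
  rw [Finset.sum_powerset_insert ha]
  rw [sub_eq_add_neg, ← Finset.sum_neg_distrib]
  congr 1
  apply Finset.sum_congr rfl
  intro t ht
  have hat : a ∉ t := fun h => ha (Finset.mem_powerset.1 ht h)
  rw [Finset.card_insert_of_notMem hat, Finset.sum_insert hat]
  rw [pow_succ, comp_assoc]
  have : (X - C (m a)).comp (X - C (∑ i ∈ t, m i)) = X - C (m a + ∑ i ∈ t, m i) := by
    simp [sub_comp, map_add]; ring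
  rw [this]
  ring

lemma Kz_sub {ι : Type*} [DecidableEq ι] (m : ι → ℚ) (s : Finset ι) (Q₁ Q₂ : ℚ[X]) :
    Kz m s (Q₁ - Q₂) = Kz m s Q₁ - Kz m s Q₂ := by
  unfold Kz
  rw [← Finset.sum_sub_distrib]
  apply Finset.sum_congr rfl
  intro t _
  rw [sub_comp]
  ring

lemma Kz_coeff {ι : Type*} [DecidableEq ι] (m : ι → ℚ) (s : Finset ι) :
    ∀ (d : ℕ) (Q : ℚ[X]), s.card ≤ d → Q.natDegree ≤ d →
      (∀ k, d - s.card < k → (Kz m s Q).coeff k = 0) ∧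
      (Kz m s Q).coeff (d - s.card) =
        Q.coeff d * (∏ i ∈ s, m i) * (d.descFactorial s.card) := by
  induction s using Finset.induction with
  | empty =>
    intro d Q _ hdeg
    have hKz : Kz m ∅ Q = Q := by simp [Kz]
    rw [hKz]
    simp only [Finset.card_empty, Nat.sub_zero]
    refine ⟨fun k hk => coeff_eq_zero_of_natDegree_lt (by omega), by simp⟩
  | @insert a s ha ih =>
    intro d Q hcard hdeg
    rw [Finset.card_insert_of_notMem ha] at hcard
    set Q' : ℚ[X] := Q - Q.comp (X - C (m a)) with hQ'
    have hK : Kz m (insert a s) Q = Kz m s Q' := by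
      rw [Kz_insert m ha, ← Kz_sub]
    have hcompdeg : (Q.comp (X - C (m a))).natDegree ≤ d := by
      refine le_trans (natDegree_comp_le) ?_
      rw [natDegree_X_sub_C]
      omega
    have hdeg' : Q'.natDegree ≤ d - 1 := by
      rw [natDegree_le_iff_coeff_eq_zero]
      intro k hk
      rw [hQ', coeff_sub]
      rcases eq_or_lt_of_le (show d ≤ k by omega) with h | h
      · rw [← h, comp_coeff_top Q _ d hdeg, sub_self]
      · rw [coeff_eq_zero_of_natDegree_lt (by omega),
          coeff_eq_zero_of_natDegree_lt (by omega), sub_self]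
    have hcoeff' : Q'.coeff (d - 1) = d * m a * Q.coeff d := by
      rw [hQ', coeff_sub, comp_coeff_sub_one Q _ d (by omega) hdeg]
      ring
    obtain ⟨h0, h1⟩ := ih (d - 1) Q' (by omega) hdeg'
    constructor
    · intro k hk
      rw [hK]
      rw [Finset.card_insert_of_notMem ha] at hk
      exact h0 k (by omega)
    · rw [hK, Finset.card_insert_of_notMem ha,
        show d - (s.card + 1) = d - 1 - s.card by omega, h1, hcoeff',
        Finset.prod_insert ha,
        show d = (d - 1) + 1 by omega, Nat.succ_descFactorial_succ]
      push_cast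
      ring

/-- Genus dependence of the Hilbert coefficients of the complete intersection: for
`H_g(x) = (1/(e−1)!)·∏_{j=1}^{e−1}(x+j)·(−μx+1−g)` and its Koszul alternating sum
`K(H_g)`, the coefficient of `x^{e−r}` is independent of `g` (i.e. `∂_g b₀ = 0`) and
`coeff_{e−r−1}(K(H_{g₁})) − coeff_{e−r−1}(K(H_{g₂})) = −(∏ m_i)·(g₁−g₂)/(e−1−r)!`
(i.e. `∂_g b₁ = −(∏ m_i)/(e−1−r)!`). -/
theorem genus_derivative_hilbert_coeffs (e : ℕ) (he : 2 ≤ e) (μ : ℚ)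
    (r : ℕ) (hr : 0 < r) (hre : r ≤ e - 1) (m : Fin r → ℕ) (hm : ∀ i, 0 < m i)
    (g₁ g₂ : ℚ) :
    let H : ℚ → Polynomial ℚ := fun g =>
      C (1 / ((e - 1).factorial : ℚ)) *
        (∏ j ∈ Finset.range (e - 1), (X + C ((j : ℚ) + 1))) *
        (-(C μ) * X + C (1 - g))
    let K : ℚ → Polynomial ℚ := fun g =>
      ∑ S : Finset (Fin r), (-1 : Polynomial ℚ) ^ S.card *
        (H g).comp (X - C ((∑ i ∈ S, m i : ℕ) : ℚ))
    (K g₁).coeff (e - r) = (K g₂).coeff (e - r) ∧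
    (K g₁).coeff (e - r - 1) - (K g₂).coeff (e - r - 1)
      = -(∏ i, (m i : ℚ)) * (g₁ - g₂) / ((e - 1 - r).factorial : ℚ) := by
  intro H K
  set mq : Fin r → ℚ := fun i => (m i : ℚ) with hmq
  set M : ℚ[X] := ∏ j ∈ Finset.range (e - 1), (X + C ((j : ℚ) + 1)) with hM
  set P : ℚ[X] := C ((g₂ - g₁) / ((e - 1).factorial : ℚ)) * M with hP
  -- K g = Kz applied
  have hKz : ∀ g, K g = Kz mq Finset.univ (H g) := by
    intro g
    rw [Kz, Finset.powerset_univ]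
    apply Finset.sum_congr rfl
    intro S _
    push_cast
    rfl
  have hHsub : H g₁ - H g₂ = P := by
    simp only [H, hP, div_eq_mul_inv, one_mul, map_mul, map_sub, map_one, ← hM]
    ring
  have hD : K g₁ - K g₂ = Kz mq Finset.univ P := by
    rw [hKz g₁, hKz g₂, ← Kz_sub, hHsub]
  -- degree facts about P
  have hMmonic : M.Monic := by
    apply monic_prod_of_monic
    intro j _
    exact monic_X_add_C _
  have hMdeg : M.natDegree = e - 1 := by
    have h1 : ∀ j ∈ Finset.range (e - 1), (X + C ((j : ℚ) + 1)).natDegree = 1 :=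
      fun j _ => natDegree_X_add_C _
    rw [hM, natDegree_prod]
    · rw [Finset.sum_congr rfl h1, Finset.sum_const, smul_eq_mul, mul_one, Finset.card_range]
    · exact fun j _ => (monic_X_add_C _).ne_zero
  have hPdeg : P.natDegree ≤ e - 1 := by
    refine le_trans (natDegree_mul_le) ?_
    simp [natDegree_C, hMdeg]
  have hPcoeff : P.coeff (e - 1) = (g₂ - g₁) / ((e - 1).factorial : ℚ) := by
    rw [hP, coeff_C_mul, ← hMdeg, hMmonic.coeff_natDegree, mul_one]
  have hcard : (Finset.univ : Finset (Fin r)).card = r := by simp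
  obtain ⟨h0, h1⟩ := Kz_coeff mq Finset.univ (e - 1) P (by rw [hcard]; exact hre) hPdeg
  rw [hcard] at h0 h1
  constructor
  · have := h0 (e - r) (by omega)
    rw [← hD, coeff_sub] at this
    linarith
  · have : (K g₁ - K g₂).coeff (e - r - 1) =
        P.coeff (e - 1) * (∏ i, mq i) * ((e - 1).descFactorial r) := by
      rw [hD, show e - r - 1 = e - 1 - r by omega]
      exact h1
    rw [coeff_sub] at this
    rw [this, hPcoeff]
    have hfact : ((e - 1).factorial : ℚ) = ((e - 1 - r).factorial : ℚ) * ((e - 1).descFactorial r : ℚ) := by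
      rw [← Nat.cast_mul, Nat.factorial_mul_descFactorial hre]
    have hne : ((e - 1 - r).factorial : ℚ) ≠ 0 := Nat.cast_ne_zero.2 (Nat.factorial_ne_zero _)
    have hne2 : ((e - 1).factorial : ℚ) ≠ 0 := Nat.cast_ne_zero.2 (Nat.factorial_ne_zero _)
    field_simp
    rw [hfact]
    ring
end

section
/- Let f, q, r be positive integers with r ≤ f + q − 1, set e = f + q, let d_F, d_Q be integers, μ_F = d_F/f, μ_Q = d_Q/q, μ_E = (d_F + d_Q)/e, and let m_1, …, m_r be positive integers. For a rational number g let H_g(x) := (1/(e−1)!)·∏_{j=1}^{e−1}(x+j)·(−μ_E·x+1−g), B_m(x) := (1/m!)·∏_{j=0}^{m−1}(x+e−1−j), T_g(x) := (f(f+1)μ_F + f·q·μ_Q)·B_{e+1}(x) + (μ_F − (1−g))·f·B_e(x), and Tr_{X,g} := ∑_{S ⊆ {1,…,r}} (−1)^{|S|} ( T_g(x − σ_S) − σ_S · H_g(x − σ_S) ), where σ_S = ∑_{i∈S} m_i. Then for all rational g_1, g_2, the coefficient of x^{e−r+1} of Tr_{X,g_1} equals that of Tr_{X,g_2}, and coeff_{e−r}(Tr_{X,g_1})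 − coeff_{e−r}(Tr_{X,g_2}) = (∏_{i=1}^{r} m_i) · (f − r) · (g_1 − g_2)/(e−r)!. -/
open Polynomial Finset


noncomputable def dOp {ι : Type*} [DecidableEq ι] (m : ι → ℚ) (s : Finset ι) (p : ℚ[X]) : ℚ[X] :=
  ∑ S ∈ s.powerset, (-1 : ℚ[X]) ^ S.card * p.comp (X - C (∑ i ∈ S, m i))

lemma dOp_empty {ι : Type*} [DecidableEq ι] (m : ι → ℚ) (p : ℚ[X]) : dOp m ∅ p = p := by
  simp [dOp]

lemma comp_shift_shift (p : ℚ[X]) (b c : ℚ) :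
    (p.comp (X - C b)).comp (X - C c) = p.comp (X - C (b + c)) := by
  rw [comp_assoc]
  congr 1
  simp [sub_comp, sub_sub, add_comm]

lemma dOp_sub {ι : Type*} [DecidableEq ι] (m : ι → ℚ) (s : Finset ι) (p p' : ℚ[X]) :
    dOp m s (p - p') = dOp m s p - dOp m s p' := by
  simp [dOp, sub_comp, mul_sub, Finset.sum_sub_distrib]

lemma dOp_insert {ι : Type*} [DecidableEq ι] (m : ι → ℚ) (s : Finset ι) (a : ι) (ha : a ∉ s)
    (p : ℚ[X]) :
    dOp m (insert a s) p = dOp m s p - dOp m s (p.comp (X - C (m a))) := by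
  have hdisj : Disjoint s.powerset (s.powerset.image (insert a)) := by
    rw [Finset.disjoint_left]
    intro S hS hS2
    obtain ⟨T, hT, rfl⟩ := Finset.mem_image.1 hS2
    exact ha (Finset.mem_powerset.1 hS (Finset.mem_insert_self a T))
  rw [dOp, Finset.powerset_insert, Finset.sum_union hdisj, Finset.sum_image]
  · rw [dOp, dOp, sub_eq_add_neg, ← Finset.sum_neg_distrib]
    congr 1
    apply Finset.sum_congr rfl
    intro S hS
    have haS : a ∉ S := fun h => ha (Finset.mem_powerset.1 hS h)
    rw [Finset.card_insert_of_notMem haS, Finset.sum_insert haS, pow_succ,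
      comp_shift_shift]
    ring
  · intro S hS T hT h
    have haS : a ∉ S := fun hh => ha (Finset.mem_powerset.1 hS hh)
    have haT : a ∉ T := fun hh => ha (Finset.mem_powerset.1 hT hh)
    rw [← Finset.erase_insert haS, ← Finset.erase_insert haT, h]


lemma comp_sub_C_coeff (p : ℚ[X]) (c : ℚ) (k : ℕ) :
    (p.comp (X - C c)).coeff k = (Polynomial.hasseDeriv k p).eval (-c) := by
  rw [show X - C c = X + C (-c) by rw [map_neg]; ring, ← Polynomial.taylor_apply,
    Polynomial.taylor_coeff]

lemma step_coeff_high (p : ℚ[X]) (n : ℕ) (c : ℚ) (hp : ∀ k, n < k → p.coeff k = 0) :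
    ∀ k, n ≤ k → (p - p.comp (X - C c)).coeff k = 0 := by
  intro k hk
  rw [coeff_sub, comp_sub_C_coeff]
  rcases eq_or_lt_of_le hk with rfl | hlt
  · have hh : Polynomial.hasseDeriv n p = C (p.coeff n) := by
      ext j
      rw [Polynomial.hasseDeriv_coeff]
      cases j with
      | zero => simp
      | succ j =>
        rw [hp _ (by omega), coeff_C]
        simp
    rw [hh, eval_C, sub_self]
  · have hh : Polynomial.hasseDeriv k p = 0 := by
      ext j
      rw [Polynomial.hasseDeriv_coeff, hp _ (by omega)]
      simp
    rw [hh, hp _ hlt, eval_zero, sub_zero]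

lemma step_coeff_top (p : ℚ[X]) (n : ℕ) (c : ℚ) (hp : ∀ k, n + 1 < k → p.coeff k = 0) :
    (p - p.comp (X - C c)).coeff n = c * (n + 1 : ℕ) * p.coeff (n + 1) := by
  rw [coeff_sub, comp_sub_C_coeff]
  have hh : Polynomial.hasseDeriv n p
      = C (p.coeff n) + C (((n : ℚ) + 1) * p.coeff (n + 1)) * X := by
    ext j
    rw [Polynomial.hasseDeriv_coeff]
    match j with
    | 0 => simp
    | 1 =>
      rw [show 1 + n = n + 1 by ring, Nat.choose_succ_self_right]
      rw [coeff_add, coeff_C]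
      simp
    | (j+2) =>
      rw [hp _ (by omega)]
      rw [coeff_add, coeff_C, coeff_C_mul, coeff_X]
      norm_num
  rw [hh]
  simp only [eval_add, eval_mul, eval_C, eval_X]
  push_cast
  ring

lemma dOp_coeff {ι : Type*} [DecidableEq ι] (m : ι → ℚ) (s : Finset ι) :
    ∀ (n : ℕ) (p : ℚ[X]), s.card ≤ n → (∀ k, n < k → p.coeff k = 0) →
      (∀ k, n - s.card < k → (dOp m s p).coeff k = 0) ∧
      (dOp m s p).coeff (n - s.card)
        = (∏ i ∈ s, m i) * (n.descFactorial s.card : ℚ) * p.coeff n := by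
  induction s using Finset.induction_on with
  | empty =>
    intro n p _ hp
    rw [dOp_empty]
    simp only [Finset.card_empty, Nat.sub_zero, Finset.prod_empty, Nat.descFactorial_zero]
    exact ⟨hp, by norm_num⟩
  | @insert a s ha ih =>
    intro n p hcard hp
    obtain ⟨n, rfl⟩ : ∃ n', n = n' + 1 := ⟨n - 1, by
      have := Finset.card_insert_of_notMem ha ▸ hcard; omega⟩
    have hcard' : s.card ≤ n := by
      have := Finset.card_insert_of_notMem ha ▸ hcard
      rw [Finset.card_insert_of_notMem ha] at hcard; omega
    set q : ℚ[X] := p - p.comp (X - C (m a)) with hq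
    have hqhigh : ∀ k, n < k → q.coeff k = 0 := fun k hk =>
      step_coeff_high p (n + 1) (m a) hp k (by omega)
    have hqtop : q.coeff n = m a * ((n + 1 : ℕ) : ℚ) * p.coeff (n + 1) :=
      step_coeff_top p n (m a) hp
    have hrec := ih n q hcard' hqhigh
    rw [dOp_insert m s a ha, ← dOp_sub, ← hq]
    rw [Finset.card_insert_of_notMem ha]
    constructor
    · intro k hk
      exact hrec.1 k (by omega)
    · rw [show n + 1 - (s.card + 1) = n - s.card by omega, hrec.2, hqtop,
        Finset.prod_insert ha, Nat.succ_descFactorial_succ]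
      push_cast
      ring


lemma linear_prod_coeff (n : ℕ) (a : ℕ → ℚ) :
    ((∏ j ∈ Finset.range n, (X + C (a j))).coeff n = 1) ∧
    (∀ k, n < k → (∏ j ∈ Finset.range n, (X + C (a j))).coeff k = 0) := by
  have hmonic : (∏ j ∈ Finset.range n, (X + C (a j))).Monic :=
    monic_prod_of_monic _ _ fun j _ => monic_X_add_C (a j)
  have hdeg : (∏ j ∈ Finset.range n, (X + C (a j))).natDegree = n := by
    rw [natDegree_prod _ _ fun j _ => (monic_X_add_C (a j)).ne_zero]
    simp [natDegree_X_add_C]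
  constructor
  · have := hmonic.coeff_natDegree
    rwa [hdeg] at this
  · intro k hk
    apply coeff_eq_zero_of_natDegree_lt
    omega

/-- Genus dependence of the total weight coefficients of the complete intersection: for
`Tr_{X,g} = ∑_{S⊆{1,…,r}} (−1)^{|S|}(T_g(x−σ_S) − σ_S·H_g(x−σ_S))`, the coefficient of
`x^{e−r+1}` is independent of `g` (i.e. `∂_g a₀ = 0`) and
`coeff_{e−r}(Tr_{X,g₁}) − coeff_{e−r}(Tr_{X,g₂}) = (∏ m_i)·(f−r)·(g₁−g₂)/(e−r)!`
(i.e. `∂_g a₁ = (∏ m_i)(f−r)/(e−r)!`); here `e = f+q`, `μ_F = d_F/f`, `μ_Q = d_Q/q`,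
`μ_E = (d_F+d_Q)/e`. -/
theorem genus_derivative_weight_coeffs (f q r : ℕ) (hf : 0 < f) (hq : 0 < q)
    (hr : 0 < r) (hre : r ≤ f + q - 1) (e : ℕ) (he : e = f + q)
    (dF dQ : ℤ) (m : Fin r → ℕ) (hm : ∀ i, 0 < m i) (g₁ g₂ : ℚ) :
    let μF : ℚ := (dF : ℚ) / (f : ℚ)
    let μQ : ℚ := (dQ : ℚ) / (q : ℚ)
    let μE : ℚ := ((dF : ℚ) + (dQ : ℚ)) / (e : ℚ)
    let H : ℚ → Polynomial ℚ := fun g =>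
      C (1 / ((e - 1).factorial : ℚ)) *
        (∏ j ∈ Finset.range (e - 1), (X + C ((j : ℚ) + 1))) *
        (-(C μE) * X + C (1 - g))
    let B : ℕ → Polynomial ℚ := fun n =>
      C (1 / (n.factorial : ℚ)) * ∏ j ∈ Finset.range n, (X + C ((e : ℚ) - 1 - (j : ℚ)))
    let T : ℚ → Polynomial ℚ := fun g =>
      C ((f : ℚ) * ((f : ℚ) + 1) * μF + (f : ℚ) * (q : ℚ) * μQ) * B (e + 1)
        + C ((μF - (1 - g)) * (f : ℚ)) * B e
    let TrX : ℚ → Polynomial ℚ := fun g =>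
      ∑ S : Finset (Fin r), (-1 : Polynomial ℚ) ^ S.card *
        ((T g).comp (X - C ((∑ i ∈ S, m i : ℕ) : ℚ))
          - C ((∑ i ∈ S, m i : ℕ) : ℚ) * (H g).comp (X - C ((∑ i ∈ S, m i : ℕ) : ℚ)))
    (TrX g₁).coeff (e - r + 1) = (TrX g₂).coeff (e - r + 1) ∧
    (TrX g₁).coeff (e - r) - (TrX g₂).coeff (e - r)
      = (∏ i, (m i : ℚ)) * ((f : ℚ) - (r : ℚ)) * (g₁ - g₂) / ((e - r).factorial : ℚ) := by
  intro μF μQ μE H B T TrX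
  obtain ⟨k, hk⟩ : ∃ k, e = r + k + 1 := ⟨e - r - 1, by omega⟩
  subst hk
  set m' : Fin r → ℚ := fun i => ((m i : ℕ) : ℚ) with hm'
  set P : ℚ[X] := C (1 / ((r + k).factorial : ℚ)) *
      ∏ j ∈ Finset.range (r + k), (X + C ((j : ℚ) + 1)) with hP
  have hT : T g₁ - T g₂ = C ((g₁ - g₂) * (f : ℚ)) * B (r + k + 1) := by
    simp only [T]
    simp only [map_sub, map_mul, map_add, map_one]
    ring
  have hH : H g₁ - H g₂ = C (g₂ - g₁) * P := by
    simp only [H, hP, show r + k + 1 - 1 = r + k from rfl]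
    generalize (∏ j ∈ Finset.range (r + k), (X + C ((j : ℚ) + 1))) = Q
    simp only [map_sub, map_mul, map_add, map_one]
    ring
  have key : TrX g₁ - TrX g₂ = C (g₁ - g₂) *
      (C (f : ℚ) * dOp m' Finset.univ (B (r + k + 1)) +
        (X * dOp m' Finset.univ P - dOp m' Finset.univ (X * P))) := by
    have e1 : T g₁ = T g₂ + C ((g₁ - g₂) * (f : ℚ)) * B (r + k + 1) := by rw [← hT]; ring
    have e2 : H g₁ = H g₂ + C (g₂ - g₁) * P := by rw [← hH]; ring
    simp only [TrX, dOp, Finset.powerset_univ, Finset.mul_sum, ← Finset.sum_sub_distrib,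
      ← Finset.sum_add_distrib]
    apply Finset.sum_congr rfl
    intro S _
    rw [e1, e2]
    simp only [add_comp, mul_comp, C_comp, X_comp, sub_comp, hm', Nat.cast_sum]
    simp only [map_sub, map_mul, map_add, map_one]
    ring
  have hcard : (Finset.univ : Finset (Fin r)).card = r := by simp
  have hBe := linear_prod_coeff (r + k + 1) (fun j => ((r + k + 1 : ℕ) : ℚ) - 1 - (j : ℚ))
  have hBtop : (B (r + k + 1)).coeff (r + k + 1) = 1 / ((r + k + 1).factorial : ℚ) := by
    simp only [B]; rw [coeff_C_mul, hBe.1, mul_one]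
  have hBhi : ∀ k', r + k + 1 < k' → (B (r + k + 1)).coeff k' = 0 := by
    intro k' h; simp only [B]; rw [coeff_C_mul, hBe.2 k' h, mul_zero]
  have hPe := linear_prod_coeff (r + k) (fun j => (j : ℚ) + 1)
  have hPtop : P.coeff (r + k) = 1 / ((r + k).factorial : ℚ) := by
    rw [hP, coeff_C_mul, hPe.1, mul_one]
  have hPhi : ∀ k', r + k < k' → P.coeff k' = 0 := by
    intro k' h; rw [hP, coeff_C_mul, hPe.2 k' h, mul_zero]
  have hXPtop : (X * P).coeff (r + k + 1) = 1 / ((r + k).factorial : ℚ) := by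
    rw [coeff_X_mul]; exact hPtop
  have hXPhi : ∀ k', r + k + 1 < k' → (X * P).coeff k' = 0 := by
    intro k' h
    obtain ⟨j, rfl⟩ : ∃ j, k' = j + 1 := ⟨k' - 1, by omega⟩
    rw [coeff_X_mul]; exact hPhi j (by omega)
  have hDB := dOp_coeff m' Finset.univ (r + k + 1) (B (r + k + 1)) (by rw [hcard]; omega) hBhi
  have hDP := dOp_coeff m' Finset.univ (r + k) P (by rw [hcard]; omega) hPhi
  have hDXP := dOp_coeff m' Finset.univ (r + k + 1) (X * P) (by rw [hcard]; omega) hXPhi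
  rw [hcard] at hDB hDP hDXP
  rw [show r + k + 1 - r = k + 1 by omega] at hDB hDXP
  rw [show r + k - r = k by omega] at hDP
  constructor
  · rw [← sub_eq_zero, ← coeff_sub, key, show r + k + 1 - r + 1 = k + 2 by omega]
    rw [coeff_C_mul, coeff_add, coeff_sub, coeff_C_mul,
      show (k + 2) = (k + 1) + 1 from rfl, coeff_X_mul]
    rw [hDB.1 (k + 1 + 1) (by omega), hDXP.1 (k + 1 + 1) (by omega), hDP.1 (k + 1) (by omega)]
    norm_num
  · rw [← coeff_sub, key, show r + k + 1 - r = k + 1 by omega]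
    rw [coeff_C_mul, coeff_add, coeff_sub, coeff_C_mul, coeff_X_mul]
    rw [hDB.2, hDP.2, hDXP.2, hBtop, hPtop, hXPtop]
    have hfac1 : ((k + 1).factorial * (r + k + 1).descFactorial r : ℕ) = (r + k + 1).factorial := by
      have h := Nat.factorial_mul_descFactorial (show r ≤ r + k + 1 by omega)
      rwa [show r + k + 1 - r = k + 1 by omega] at h
    have hfac2 : (k.factorial * (r + k).descFactorial r : ℕ) = (r + k).factorial := by
      have h := Nat.factorial_mul_descFactorial (show r ≤ r + k by omega)
      rwa [show r + k - r = k by omega] at h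
    have h1 : (((r + k + 1).descFactorial r : ℕ) : ℚ)
        = ((r + k + 1).factorial : ℚ) / ((k + 1).factorial : ℚ) := by
      rw [eq_div_iff (by exact_mod_cast (k + 1).factorial_ne_zero)]
      rw [mul_comm]
      exact_mod_cast congrArg (Nat.cast : ℕ → ℚ) hfac1
    have h2 : (((r + k).descFactorial r : ℕ) : ℚ)
        = ((r + k).factorial : ℚ) / ((k).factorial : ℚ) := by
      rw [eq_div_iff (by exact_mod_cast (k).factorial_ne_zero)]
      rw [mul_comm]
      exact_mod_cast congrArg (Nat.cast : ℕ → ℚ) hfac2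
    rw [h1, h2]
    have hx1 : ((r + k + 1).factorial : ℚ) = ((r : ℚ) + k + 1) * ((r + k).factorial : ℚ) := by
      rw [show r + k + 1 = (r + k) + 1 from rfl, Nat.factorial_succ]; push_cast; ring
    have hx2 : ((k + 1).factorial : ℚ) = ((k : ℚ) + 1) * (k.factorial : ℚ) := by
      rw [Nat.factorial_succ]; push_cast; ring
    rw [hx1, hx2]
    have n1 : ((r + k).factorial : ℚ) ≠ 0 := by exact_mod_cast (r + k).factorial_ne_zero
    have n2 : ((k).factorial : ℚ) ≠ 0 := by exact_mod_cast (k).factorial_ne_zero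
    have n3 : ((k : ℚ) + 1) ≠ 0 := by positivity
    have n4 : ((r : ℚ) + k + 1) ≠ 0 := by positivity
    simp only [hm']
    field_simp
    ring
end
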